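/- arXiv:1605.00813 — 9 statements merged into one kernel-verified Lean document; each statement's English description precedes it below -/
import Mathlib

section
/- Let (λ_n)_{n≥1} be the sequence in F_q defined by recursion (2). Then (λ_n)_{n≥1} is p-automatic, i.e., its p-kernel { (λ(p^i n + j))_{n≥1} : i ≥ 0, 0 ≤ j < p^i } is a finite set of sequences. -/
set_option maxHeartbeats 1000000

/-- Auxiliary parametrization of a finite family of sequences used to bound the kernel. -/
def recAutoAux (F : Type*) [Mul F] (L : ℤ → F) (p t ℓ k : ℕ) :
    (Fin (4 * ℓ + 8) → F) × (ZMod k → F) × (F → F) × Fin t ×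
      (Set.Icc (-(2 * (ℓ : ℤ) + 2)) ((p : ℤ) ^ t + (2 * ℓ + 2)) : Set ℤ) → ℕ → F :=
  fun q n => if hn : n < 4 * ℓ + 8 then q.1 ⟨n, hn⟩ else
    q.2.1 (n : ZMod k) * q.2.2.1 (L ((p : ℤ) ^ ((q.2.2.2.1 : Fin t) : ℕ) * n + (q.2.2.2.2 : ℤ)))

/-- Theorem 2 of the paper (automaticity part). Let `(λ_n)_{n ≥ 1}` in `F_q` be defined
by recursion (2): for all `m ≥ 0` and `0 ≤ i < k`, `λ_{ℓ+1+r(km+i)} = α_{i+1} (λ_{km+i+1})^r`,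
and for `1 ≤ j < r`, `λ_{ℓ+1+rm+j} = β_j`. Then `(λ_n)_{n ≥ 1}` is `p`-automatic, i.e. its
`p`-kernel `{ (λ (p^i n + j))_{n ≥ 1} : i ≥ 0, 0 ≤ j < p^i }` is a finite set of sequences. -/
theorem recurrence_p_automatic {F : Type*} [Field F] [Fintype F]
    (p s t : ℕ) (hp : p.Prime) (hs : 1 ≤ s) (ht : 1 ≤ t)
    (hcard : Fintype.card F = p ^ s)
    (r : ℕ) (hr : r = p ^ t)
    (ℓ k : ℕ) (hℓ : 1 ≤ ℓ) (hk : 1 ≤ k) (hkr : k ∣ r)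
    (lam α β : ℕ → F)
    (hα : ∀ i, 1 ≤ i → i ≤ k → α i ≠ 0)
    (hrec1 : ∀ m i : ℕ, i < k →
      lam (ℓ + 1 + r * (k * m + i)) = α (i + 1) * (lam (k * m + i + 1)) ^ r)
    (hrec2 : ∀ m j : ℕ, 1 ≤ j → j < r → lam (ℓ + 1 + r * m + j) = β j) :
    Set.Finite {u : ℕ → F | ∃ i j : ℕ, j < p ^ i ∧ u = fun n => lam (p ^ i * n + j)} := by
  classical
  haveI : NeZero k := ⟨by omega⟩
  have hp2 : 2 ≤ p := hp.two_le
  have hr2 : 2 ≤ r := by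
    rw [hr]
    calc 2 ≤ p := hp2
    _ = p ^ 1 := (pow_one p).symm
    _ ≤ p ^ t := Nat.pow_le_pow_right (by omega) ht
  have hr2' : (2 : ℤ) ≤ (r : ℤ) := by exact_mod_cast hr2
  set L : ℤ → F := fun z => lam z.toNat with hLdef
  -- Consolidated recursion
  have hA : ∀ m : ℕ, lam (ℓ + 1 + r * m) = α (m % k + 1) * lam (m + 1) ^ r := by
    intro m
    have h1 : m % k < k := Nat.mod_lt _ (by omega)
    have h2 := hrec1 (m / k) (m % k) h1
    rwa [Nat.div_add_mod] at h2
  -- Main claim: normal form of kernel sequences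
  have main : ∀ i : ℕ, ∀ e : ℤ, -(2 * (ℓ : ℤ) + 2) ≤ e → e ≤ (p : ℤ) ^ i + (2 * ℓ + 2) →
      ∃ c : ℕ, c < t ∧ ∃ e' : ℤ, -(2 * (ℓ : ℤ) + 2) ≤ e' ∧ e' ≤ (p : ℤ) ^ c + (2 * ℓ + 2) ∧
      ∃ (g : ZMod k → F) (φ : F → F),
      ∀ n : ℕ, 4 * ℓ + 8 ≤ n →
        L ((p : ℤ) ^ i * n + e) = g (n : ZMod k) * φ (L ((p : ℤ) ^ c * n + e')) := by
    intro i
    induction i using Nat.strong_induction_on with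
    | _ i IH =>
      intro e he1 he2
      by_cases hit : i < t
      · exact ⟨i, hit, e, he1, he2, fun _ => 1, id, fun n hn => (one_mul _).symm⟩
      · push_neg at hit
        have hti : t + (i - t) = i := by omega
        have hpowi : (p : ℤ) ^ i = (r : ℤ) * (p : ℤ) ^ (i - t) := by
          have h0 : (r : ℤ) = (p : ℤ) ^ t := by rw [hr]; push_cast; ring
          rw [h0, ← pow_add, hti]
        have hpow1 : (1 : ℤ) ≤ (p : ℤ) ^ (i - t) := one_le_pow₀ (by exact_mod_cast hp.one_le)
        set j' : ℤ := (e - ℓ - 1) % r with hj'def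
        have hj'0 : 0 ≤ j' := Int.emod_nonneg _ (by omega)
        have hj'r : j' < r := Int.emod_lt_of_pos _ (by omega)
        have hdvd : (r : ℤ) ∣ (e - ℓ - 1 - j') := Int.dvd_self_sub_of_emod_eq rfl
        set E' : ℤ := (e - ℓ - 1 - j') / r with hE'def
        have hrE' : (r : ℤ) * E' = e - ℓ - 1 - j' := Int.mul_ediv_cancel' hdvd
        -- bounds on E' + 1
        have hE'lb : -(2 * (ℓ : ℤ) + 2) ≤ E' + 1 := by
          rcases le_or_gt 0 (E' + 1) with h | h
          · linarith
          · have h1 : -(3 * (ℓ : ℤ) + 2) ≤ (r : ℤ) * (E' + 1) := by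
              have := hrE'; nlinarith
            have h2 : (r : ℤ) * (E' + 1) ≤ 2 * (E' + 1) :=
              mul_le_mul_of_nonpos_right hr2' (by linarith)
            linarith
        have hE'ub : E' + 1 ≤ (p : ℤ) ^ (i - t) + (2 * ℓ + 2) := by
          rcases le_or_gt E' ((p : ℤ) ^ (i - t)) with h | h
          · linarith
          · have h1 : (r : ℤ) * (E' - (p : ℤ) ^ (i - t)) ≤ (ℓ : ℤ) + 1 := by
              have h3 : (r : ℤ) * E' ≤ (p : ℤ) ^ i + (ℓ : ℤ) + 1 := by linarith
              rw [hpowi] at h3; linarith [mul_sub (r : ℤ) E' ((p : ℤ) ^ (i - t))]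
            have h2 : 2 * (E' - (p : ℤ) ^ (i - t)) ≤ (r : ℤ) * (E' - (p : ℤ) ^ (i - t)) :=
              mul_le_mul_of_nonneg_right hr2' (by linarith)
            linarith
        -- basic positivity for n ≥ 4ℓ+8
        have hXpos : ∀ n : ℕ, 4 * ℓ + 8 ≤ n → (1 : ℤ) ≤ (p : ℤ) ^ (i - t) * n + E' := by
          intro n hn
          have hnpos : (4 * (ℓ : ℤ) + 8) ≤ (n : ℤ) := by exact_mod_cast hn
          have hge : (n : ℤ) ≤ (p : ℤ) ^ (i - t) * n :=
            le_mul_of_one_le_left (by positivity) hpow1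
          linarith
        by_cases hj0 : j' = 0
        · -- self-similar case
          obtain ⟨c, hc, e', he'1, he'2, g', φ', hIH⟩ :=
            IH (i - t) (by omega) (E' + 1) hE'lb hE'ub
          refine ⟨c, hc, e', he'1, he'2,
            fun z => α (((p : ZMod k) ^ (i - t) * z + (E' : ZMod k)).val + 1) * (g' z) ^ r,
            fun x => (φ' x) ^ r, fun n hn => ?_⟩
          have hX : (1 : ℤ) ≤ (p : ℤ) ^ (i - t) * n + E' := hXpos n hn
          set X : ℤ := (p : ℤ) ^ (i - t) * n + E' with hXdef
          set mN : ℕ := X.toNat with hmNdef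
          have hmNX : (mN : ℤ) = X := Int.toNat_of_nonneg (by omega)
          have hcast : (p : ℤ) ^ i * n + e = ((ℓ + 1 + r * mN : ℕ) : ℤ) := by
            push_cast [hmNX]
            rw [hXdef, hpowi, mul_add, ← mul_assoc]
            have : (r : ℤ) * (p : ℤ) ^ (i - t) = (p : ℤ) ^ (i - t) * r := mul_comm _ _
            rw [hrE', hj0] at *
            linarith [hrE']
          have h1 : L ((p : ℤ) ^ i * n + e) = lam (ℓ + 1 + r * mN) := by
            rw [hLdef]; simp only [hcast, Int.toNat_natCast]
          have h2 : lam (mN + 1) = L ((p : ℤ) ^ (i - t) * n + (E' + 1)) := by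
            rw [hLdef]
            show lam (mN + 1) = lam ((p : ℤ) ^ (i - t) * n + (E' + 1)).toNat
            congr 1
            have hXX : (p : ℤ) ^ (i - t) * n + (E' + 1) = X + 1 := by rw [hXdef]; ring
            rw [hXX]
            omega
          have h3 : (mN : ZMod k) = (p : ZMod k) ^ (i - t) * (n : ZMod k) + (E' : ZMod k) := by
            have hc1 : ((mN : ℤ) : ZMod k) = ((X : ℤ) : ZMod k) := by rw [hmNX]
            push_cast at hc1
            rw [hc1, hXdef]
            push_cast
            ring
          have h4 : mN % k = ((p : ZMod k) ^ (i - t) * (n : ZMod k) + (E' : ZMod k)).val := by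
            rw [← h3, ZMod.val_natCast]
          rw [h1, hA mN, h4, h2, hIH n hn, mul_pow]
          ring
        · -- constant case
          refine ⟨0, by omega, 0, by have := Int.natCast_nonneg ℓ; linarith, by positivity, fun _ => β j'.toNat,
            fun _ => 1, fun n hn => ?_⟩
          have hX : (1 : ℤ) ≤ (p : ℤ) ^ (i - t) * n + E' := hXpos n hn
          set X : ℤ := (p : ℤ) ^ (i - t) * n + E' with hXdef
          set mN : ℕ := X.toNat with hmNdef
          have hmNX : (mN : ℤ) = X := Int.toNat_of_nonneg (by omega)
          have hcast : (p : ℤ) ^ i * n + e = ((ℓ + 1 + r * mN + j'.toNat : ℕ) : ℤ) := by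
            push_cast [hmNX, Int.toNat_of_nonneg hj'0]
            rw [hXdef, hpowi, mul_add, ← mul_assoc]
            linarith [hrE']
          have h1 : L ((p : ℤ) ^ i * n + e) = lam (ℓ + 1 + r * mN + j'.toNat) := by
            rw [hLdef]; simp only [hcast, Int.toNat_natCast]
          rw [h1, hrec2 mN j'.toNat (by omega) (by omega)]
          simp
  -- Finiteness via a finite parameter space
  haveI : Finite F := Finite.of_fintype F
  haveI : Finite (Set.Icc (-(2 * (ℓ : ℤ) + 2)) ((p : ℤ) ^ t + (2 * ℓ + 2)) : Set ℤ) :=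
    (Set.finite_Icc _ _).to_subtype
  apply Set.Finite.subset (Set.finite_range (recAutoAux F L p t ℓ k))
  rintro u ⟨i, j, hj, rfl⟩
  obtain ⟨c, hc, e', he'1, he'2, g, φ, hmain⟩ := main i (j : ℤ)
    (by have := Int.natCast_nonneg ℓ; have := Int.natCast_nonneg j; linarith)
    (by
      have h1 : ((j : ℤ)) < ((p ^ i : ℕ) : ℤ) := by exact_mod_cast hj
      push_cast at h1
      linarith)
  have he'Icc : e' ∈ (Set.Icc (-(2 * (ℓ : ℤ) + 2)) ((p : ℤ) ^ t + (2 * ℓ + 2)) : Set ℤ) := by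
    constructor
    · exact he'1
    · have hple : (p : ℤ) ^ c ≤ (p : ℤ) ^ t :=
        pow_le_pow_right₀ (by exact_mod_cast hp.one_le) (le_of_lt hc)
      linarith
  refine ⟨⟨fun x => lam (p ^ i * (x : ℕ) + j), g, φ, ⟨c, hc⟩, ⟨e', he'Icc⟩⟩, ?_⟩
  funext n
  simp only [recAutoAux]
  split_ifs with hn
  · rfl
  · push_neg at hn
    have hm := hmain n hn
    have hLL : L ((p : ℤ) ^ i * n + (j : ℤ)) = lam (p ^ i * n + j) := by
      rw [hLdef]
      show lam ((p : ℤ) ^ i * n + (j : ℤ)).toNat = lam (p ^ i * n + j)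
      congr 1
    rw [hLL] at hm
    exact hm.symm
end

section
/- Let (λ_n)_{n≥1} be the sequence in F_q defined by recursion (2), let F = { ℓ + rn + i : n ≥ 0, 2 ≤ i ≤ r } and ρ_1 = ∑_{n∈F} λ_n X^n ∈ F_q[[X]]. Then (1 − X)^r · ρ_1 = ∑_{j=1}^{r−1} β_j X^{ℓ+1+j} in F_q[[X]]. -/
open scoped Classical

/-- Equation (4) of the paper (in the variable `X = 1/T`, before raising to the power `r`).
Let `(λ_n)_{n ≥ 1}` in `F_q` be defined by recursion (2), let
`F = { ℓ + rn + i : n ≥ 0, 2 ≤ i ≤ r }` and `ρ₁ = ∑_{n ∈ F} λ_n X^n`. Then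
`(1 - X)^r * ρ₁ = ∑_{j=1}^{r-1} β_j X^(ℓ+1+j)` in `F_q[[X]]`. -/
theorem recurrence_rho_one {F : Type*} [Field F] [Fintype F]
    (p s t : ℕ) (hp : p.Prime) (hs : 1 ≤ s) (ht : 1 ≤ t)
    (hcard : Fintype.card F = p ^ s)
    (r : ℕ) (hr : r = p ^ t)
    (ℓ k : ℕ) (hℓ : 1 ≤ ℓ) (hk : 1 ≤ k) (hkr : k ∣ r)
    (lam α β : ℕ → F)
    (hα : ∀ i, 1 ≤ i → i ≤ k → α i ≠ 0)
    (hrec1 : ∀ m i : ℕ, i < k →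
      lam (ℓ + 1 + r * (k * m + i)) = α (i + 1) * (lam (k * m + i + 1)) ^ r)
    (hrec2 : ∀ m j : ℕ, 1 ≤ j → j < r → lam (ℓ + 1 + r * m + j) = β j)
    (ρ₁ : PowerSeries F)
    (hρ₁ : ρ₁ = PowerSeries.mk fun n =>
      if ∃ m i : ℕ, 2 ≤ i ∧ i ≤ r ∧ n = ℓ + r * m + i then lam n else 0) :
    (1 - PowerSeries.X) ^ r * ρ₁ =
      ∑ j ∈ Finset.Ico 1 r, PowerSeries.C (β j) * PowerSeries.X ^ (ℓ + 1 + j) := by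
  haveI : Fact p.Prime := ⟨hp⟩
  -- the characteristic of `F` is `p`
  haveI : CharP F (ringChar F) := ringChar.charP F
  obtain ⟨n, hqprime, hcardq⟩ := FiniteField.card F (ringChar F)
  have hq : ringChar F = p := by
    have h1 : ringChar F ∣ p ^ s := by
      rw [← hcard, hcardq]
      exact dvd_pow_self _ n.pos.ne'
    exact (Nat.prime_dvd_prime_iff_eq hqprime hp).mp (hqprime.dvd_of_dvd_pow h1)
  haveI hFp : CharP F p := hq ▸ ringChar.charP F
  have hCinj : Function.Injective (PowerSeries.C (R := F)) := fun a b h => by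
    simpa using congrArg (PowerSeries.constantCoeff (R := F)) h
  haveI : CharP (PowerSeries F) p := charP_of_injective_ringHom hCinj p
  have hr2 : 2 ≤ r := by
    rw [hr]
    calc 2 ≤ p := hp.two_le
    _ = p ^ 1 := (pow_one p).symm
    _ ≤ p ^ t := Nat.pow_le_pow_right hp.pos ht
  -- frobenius: (1 - X)^r = 1 - X^r
  have hfrob : (1 - PowerSeries.X : PowerSeries F) ^ r = 1 - PowerSeries.X ^ r := by
    rw [hr, sub_pow_char_pow, one_pow]
  rw [hfrob]
  -- key lemma: on the support, `lam` is given by `β` of the residue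
  have hPlam : ∀ n : ℕ, (∃ m i : ℕ, 2 ≤ i ∧ i ≤ r ∧ n = ℓ + r * m + i) →
      lam n = β ((n - ℓ - 1) % r) := by
    rintro _ ⟨m, i, h2, hir, rfl⟩
    have h1 : ℓ + r * m + i - ℓ - 1 = r * m + (i - 1) := by omega
    have h2' : (r * m + (i - 1)) % r = i - 1 := by
      rw [Nat.mul_add_mod]
      exact Nat.mod_eq_of_lt (by omega)
    rw [h1, h2']
    have h := hrec2 m (i - 1) (by omega) (by omega)
    have h3 : ℓ + 1 + r * m + (i - 1) = ℓ + r * m + i := by omega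
    rwa [h3] at h
  -- lower bound on the support
  have hPlb : ∀ n : ℕ, (∃ m i : ℕ, 2 ≤ i ∧ i ≤ r ∧ n = ℓ + r * m + i) → ℓ + 2 ≤ n := by
    rintro _ ⟨m, i, h2, hir, rfl⟩
    have : 0 ≤ r * m := Nat.zero_le _
    omega
  -- shifting the support
  have hPshift : ∀ n : ℕ, ℓ + r < n →
      ((∃ m i : ℕ, 2 ≤ i ∧ i ≤ r ∧ n = ℓ + r * m + i) ↔
        (∃ m i : ℕ, 2 ≤ i ∧ i ≤ r ∧ n - r = ℓ + r * m + i)) := by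
    intro n hn
    constructor
    · rintro ⟨m, i, h2, hir, rfl⟩
      rcases m with _ | m
      · exfalso
        simp only [Nat.mul_zero, Nat.add_zero] at hn
        omega
      · refine ⟨m, i, h2, hir, ?_⟩
        have hm : r * (m + 1) = r * m + r := by ring
        omega
    · rintro ⟨m, i, h2, hir, h⟩
      refine ⟨m + 1, i, h2, hir, ?_⟩
      have hm : r * (m + 1) = r * m + r := by ring
      omega
  ext d
  rw [sub_mul, one_mul, map_sub, mul_comm (PowerSeries.X ^ r) ρ₁,
    PowerSeries.coeff_mul_X_pow', hρ₁, PowerSeries.coeff_mk, PowerSeries.coeff_mk, map_sum]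
  simp only [PowerSeries.coeff_C_mul, PowerSeries.coeff_X_pow, mul_ite, mul_one, mul_zero]
  -- compute the RHS sum
  have hRHS : (∑ j ∈ Finset.Ico 1 r, if d = ℓ + 1 + j then β j else 0) =
      if ℓ + 2 ≤ d ∧ d ≤ ℓ + r then β (d - ℓ - 1) else 0 := by
    by_cases hd : ℓ + 2 ≤ d ∧ d ≤ ℓ + r
    · rw [Finset.sum_eq_single (d - ℓ - 1)]
      · rw [if_pos hd, if_pos (by omega)]
      · intro j hj hjne
        rw [if_neg]
        simp only [Finset.mem_Ico] at hj
        omega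
      · intro h
        exact absurd (Finset.mem_Ico.mpr ⟨by omega, by omega⟩) h
    · rw [if_neg hd, Finset.sum_eq_zero]
      intro j hj
      simp only [Finset.mem_Ico] at hj
      rw [if_neg (by omega)]
  rw [hRHS]
  by_cases hB : r ≤ d
  · by_cases hPd : ∃ m i : ℕ, 2 ≤ i ∧ i ≤ r ∧ d = ℓ + r * m + i
    · have hd2 := hPlb d hPd
      by_cases h2 : d ≤ ℓ + r
      · have hC : ¬ ∃ m i : ℕ, 2 ≤ i ∧ i ≤ r ∧ d - r = ℓ + r * m + i := fun h => by
          have := hPlb _ h; omega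
        rw [if_pos hPd, if_pos hB, if_neg hC, if_pos ⟨hd2, h2⟩, hPlam d hPd,
          Nat.mod_eq_of_lt (by omega : d - ℓ - 1 < r), sub_zero]
      · push_neg at h2
        have hC : ∃ m i : ℕ, 2 ≤ i ∧ i ≤ r ∧ d - r = ℓ + r * m + i :=
          (hPshift d (by omega)).mp hPd
        rw [if_pos hPd, if_pos hB, if_pos hC,
          if_neg (by omega : ¬(ℓ + 2 ≤ d ∧ d ≤ ℓ + r)), hPlam d hPd, hPlam _ hC]
        have hd3 := hPlb _ hC
        have he : d - ℓ - 1 = (d - r - ℓ - 1) + r := by omega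
        rw [he, Nat.add_mod_right, sub_self]
    · have hC : ¬ ∃ m i : ℕ, 2 ≤ i ∧ i ≤ r ∧ d - r = ℓ + r * m + i := by
        intro h
        have hd2 := hPlb _ h
        exact hPd ((hPshift d (by omega)).mpr h)
      have hD : ¬(ℓ + 2 ≤ d ∧ d ≤ ℓ + r) := fun h =>
        hPd ⟨0, d - ℓ, by omega, by omega, by omega⟩
      rw [if_neg hPd, if_pos hB, if_neg hC, if_neg hD, sub_zero]
  · by_cases hPd : ∃ m i : ℕ, 2 ≤ i ∧ i ≤ r ∧ d = ℓ + r * m + i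
    · have hd2 := hPlb d hPd
      have h2 : d ≤ ℓ + r := by omega
      rw [if_pos hPd, if_neg hB, if_pos ⟨hd2, h2⟩, hPlam d hPd,
        Nat.mod_eq_of_lt (by omega : d - ℓ - 1 < r), sub_zero]
    · have hD : ¬(ℓ + 2 ≤ d ∧ d ≤ ℓ + r) := fun h =>
        hPd ⟨0, d - ℓ, by omega, by omega, by omega⟩
      rw [if_neg hPd, if_neg hB, if_neg hD, sub_zero]
end

section
/- Let (λ_n)_{n≥1} be the sequence in F_q defined by recursion (2), let (α_n)_{n≥1} be the purely k-periodic extension of (α_1,…,α_k), and let F = { ℓ + rn + i : n ≥ 0, 2 ≤ i ≤ r }. Then in F_q[[X]] one has (1 − X)^{r²} · ∑_{n∈F} α_n (λ_n)^r X^{rn} = ∑_{j=1}^{r−1} α_{ℓ+1+j} (β_j)^r X^{r(ℓ+1+j)}. -/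
open scoped Classical

/-- Equation (4) of the paper (in the variable `X = 1/T`). Let `(λ_n)_{n ≥ 1}` in `F_q` be
defined by recursion (2), let `(αe_n)_{n ≥ 1}` be the purely `k`-periodic extension of
`(α_1, …, α_k)`, and let `F = { ℓ + rn + i : n ≥ 0, 2 ≤ i ≤ r }`. Then in `F_q[[X]]`:
`(1 - X)^(r²) * ∑_{n ∈ F} αe_n (λ_n)^r X^(rn) = ∑_{j=1}^{r-1} αe_{ℓ+1+j} (β_j)^r X^(r(ℓ+1+j))`.
The series `∑_{n ∈ F} αe_n (λ_n)^r X^(rn)` is encoded by its coefficients: the coefficient of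
`X^m` is `αe_{m/r} (λ_{m/r})^r` if `m = rn` for some `n ∈ F`, and `0` otherwise. -/
theorem recurrence_F_part {F : Type*} [Field F] [Fintype F]
    (p s t : ℕ) (hp : p.Prime) (hs : 1 ≤ s) (ht : 1 ≤ t)
    (hcard : Fintype.card F = p ^ s)
    (r : ℕ) (hr : r = p ^ t)
    (ℓ k : ℕ) (hℓ : 1 ≤ ℓ) (hk : 1 ≤ k) (hkr : k ∣ r)
    (lam α β : ℕ → F)
    (hα : ∀ i, 1 ≤ i → i ≤ k → α i ≠ 0)
    (hrec1 : ∀ m i : ℕ, i < k →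
      lam (ℓ + 1 + r * (k * m + i)) = α (i + 1) * (lam (k * m + i + 1)) ^ r)
    (hrec2 : ∀ m j : ℕ, 1 ≤ j → j < r → lam (ℓ + 1 + r * m + j) = β j)
    (αe : ℕ → F)
    (hαe₁ : ∀ i, 1 ≤ i → i ≤ k → αe i = α i)
    (hαe₂ : ∀ n, 1 ≤ n → αe (n + k) = αe n)
    (S : PowerSeries F)
    (hS : S = PowerSeries.mk fun m =>
      if ∃ m' i : ℕ, 2 ≤ i ∧ i ≤ r ∧ m = r * (ℓ + r * m' + i) then
        αe (m / r) * (lam (m / r)) ^ r else 0) :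
    (1 - PowerSeries.X) ^ (r ^ 2) * S =
      ∑ j ∈ Finset.Ico 1 r,
        PowerSeries.C (αe (ℓ + 1 + j) * (β j) ^ r) * PowerSeries.X ^ (r * (ℓ + 1 + j)) := by
  have hr2 : 2 ≤ r := by
    rw [hr]
    calc 2 ≤ p := hp.two_le
    _ ≤ p ^ t := Nat.le_self_pow (by omega) p
  have hr0 : 0 < r := by omega
  -- characteristic p
  haveI hFp : CharP F p := by
    obtain ⟨n, hc, hcard'⟩ := FiniteField.card F (ringChar F)
    have : ringChar F = p := by
      have hdvd : ringChar F ∣ p ^ s := by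
        rw [← hcard, hcard']
        exact dvd_pow_self _ (by positivity)
      exact (Nat.prime_dvd_prime_iff_eq hc hp).mp (hc.dvd_of_dvd_pow hdvd)
    rw [← this]; exact ringChar.charP F
  -- Frobenius: (1 - X)^(r^2) = 1 - X^(r^2)
  haveI : Fact p.Prime := ⟨hp⟩
  haveI hFPS : CharP (PowerSeries F) p :=
    charP_of_injective_ringHom (PowerSeries.C_injective (R := F)) p
  have hfrob : (1 - PowerSeries.X : PowerSeries F) ^ (r ^ 2) =
      1 - PowerSeries.X ^ (r ^ 2) := by
    have : r ^ 2 = p ^ (t * 2) := by rw [hr, ← pow_mul]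
    rw [this, sub_pow_char_pow, one_pow]
  -- periodicity of αe
  obtain ⟨d, hd⟩ := hkr
  have hper : ∀ n c, 1 ≤ n → αe (n + k * c) = αe n := by
    intro n c hn
    induction c with
    | zero => simp
    | succ c ih => rw [Nat.mul_succ, ← Nat.add_assoc, hαe₂ _ (by omega), ih]
  have hperr : ∀ n c, 1 ≤ n → αe (n + r * c) = αe n := by
    intro n c hn
    have h1 : r * c = k * (d * c) := by rw [hd]; ring
    rw [h1, hper n _ hn]
  -- the coefficient values
  set v : ℕ → F := fun j => αe (ℓ + 1 + j) * (β j) ^ r with hv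
  -- the predicate characterizing nonzero coefficients
  have hiff : ∀ m : ℕ, (∃ m' i : ℕ, 2 ≤ i ∧ i ≤ r ∧ m = r * (ℓ + r * m' + i)) ↔
      (∃ m' j : ℕ, 1 ≤ j ∧ j < r ∧ m = r * (ℓ + 1 + j) + r ^ 2 * m') := by
    intro m
    constructor
    · rintro ⟨m', i, hi2, hir, rfl⟩
      obtain ⟨j, rfl⟩ : ∃ j, i = j + 1 := ⟨i - 1, by omega⟩
      exact ⟨m', j, by omega, by omega, by ring⟩
    · rintro ⟨m', j, hj1, hjr, rfl⟩
      exact ⟨m', j + 1, by omega, by omega, by ring⟩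
  -- coefficient of S at indices of the given form
  have hcoeffS : ∀ m' j : ℕ, 1 ≤ j → j < r →
      PowerSeries.coeff (r * (ℓ + 1 + j) + r ^ 2 * m') S = v j := by
    intro m' j hj1 hjr
    rw [hS, PowerSeries.coeff_mk]
    rw [if_pos ((hiff _).mpr ⟨m', j, hj1, hjr, rfl⟩)]
    have hdiv : (r * (ℓ + 1 + j) + r ^ 2 * m') / r = ℓ + 1 + j + r * m' := by
      rw [pow_two, mul_assoc, ← Nat.mul_add, Nat.mul_div_cancel_left _ hr0]
    rw [hdiv]
    have h1 : ℓ + 1 + j + r * m' = ℓ + 1 + r * m' + j := by ring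
    have h2 : αe (ℓ + 1 + j + r * m') = αe (ℓ + 1 + j) := hperr _ _ (by omega)
    rw [h2, h1, hrec2 m' j hj1 hjr]
  -- uniqueness of the representation
  have huniq : ∀ j j' m' m'' : ℕ, 1 ≤ j → j < r → 1 ≤ j' → j' < r →
      r * (ℓ + 1 + j) + r ^ 2 * m' = r * (ℓ + 1 + j') + r ^ 2 * m'' →
      j = j' ∧ m' = m'' := by
    intro j j' m' m'' hj1 hjr hj'1 hj'r heq
    have h1 : r * (ℓ + 1 + j + r * m') = r * (ℓ + 1 + j' + r * m'') := by
      rw [Nat.mul_add, Nat.mul_add, ← mul_assoc, ← pow_two] at *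
      linarith [heq]
    have h2 : j + r * m' = j' + r * m'' := by
      have := Nat.eq_of_mul_eq_mul_left hr0 h1
      omega
    have h3 : j = j' := by
      have e1 : (j + r * m') % r = j := by
        rw [Nat.add_mul_mod_self_left, Nat.mod_eq_of_lt hjr]
      have e2 : (j' + r * m'') % r = j' := by
        rw [Nat.add_mul_mod_self_left, Nat.mod_eq_of_lt hj'r]
      rw [← e1, ← e2, h2]
    refine ⟨h3, ?_⟩
    subst h3
    have : r * m' = r * m'' := by omega
    exact Nat.eq_of_mul_eq_mul_left hr0 this
  -- main computation
  rw [hfrob, sub_mul, one_mul]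
  ext m
  rw [map_sub, PowerSeries.coeff_X_pow_mul', map_sum]
  have hRHS : ∀ j ∈ Finset.Ico 1 r,
      PowerSeries.coeff m (PowerSeries.C (v j) * PowerSeries.X ^ (r * (ℓ + 1 + j))) =
      if m = r * (ℓ + 1 + j) then v j else 0 := fun j _ =>
    PowerSeries.coeff_C_mul_X_pow _ _ _
  rw [Finset.sum_congr rfl hRHS]
  by_cases hPm : ∃ m' j : ℕ, 1 ≤ j ∧ j < r ∧ m = r * (ℓ + 1 + j) + r ^ 2 * m'
  · obtain ⟨m', j, hj1, hjr, rfl⟩ := hPm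
    rw [hcoeffS m' j hj1 hjr]
    have hsum : ∑ j' ∈ Finset.Ico 1 r,
        (if r * (ℓ + 1 + j) + r ^ 2 * m' = r * (ℓ + 1 + j') then v j' else 0) =
        if m' = 0 then v j else 0 := by
      rcases Nat.eq_zero_or_pos m' with hm' | hm'
      · subst hm'
        rw [if_pos rfl]
        rw [Finset.sum_eq_single j]
        · rw [if_pos (by ring)]
        · intro j' hj' hne
          rw [if_neg]
          intro hcontra
          simp only [Finset.mem_Ico] at hj'
          exact hne ((huniq j' j 0 0 hj'.1 hj'.2 hj1 hjr
            (by rw [← hcontra]; ring)).1)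
        · intro hcontra
          exact absurd (Finset.mem_Ico.mpr ⟨hj1, hjr⟩) hcontra
      · rw [if_neg (by omega)]
        apply Finset.sum_eq_zero
        intro j' hj'
        simp only [Finset.mem_Ico] at hj'
        rw [if_neg]
        intro hcontra
        have := huniq j j' m' 0 hj1 hjr hj'.1 hj'.2 (by rw [hcontra]; ring)
        omega
    rw [hsum]
    rcases Nat.eq_zero_or_pos m' with hm' | hm'
    · subst hm'
      rw [if_pos rfl]
      have hlt : ¬ (r ^ 2 ≤ r * (ℓ + 1 + j) + r ^ 2 * 0) ∨
          (r ^ 2 ≤ r * (ℓ + 1 + j) + r ^ 2 * 0) := by tauto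
      by_cases hle : r ^ 2 ≤ r * (ℓ + 1 + j) + r ^ 2 * 0
      · rw [if_pos hle]
        have hz : PowerSeries.coeff (r * (ℓ + 1 + j) + r ^ 2 * 0 - r ^ 2) S = 0 := by
          rw [hS, PowerSeries.coeff_mk, if_neg]
          rw [hiff]
          rintro ⟨m'', j'', hj''1, hj''r, heq⟩
          have heq2 : r * (ℓ + 1 + j) + r ^ 2 * 0 = r * (ℓ + 1 + j'') + r ^ 2 * (m'' + 1) := by
            have hx : r ^ 2 * (m'' + 1) = r ^ 2 * m'' + r ^ 2 := by ring
            omega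
          have := huniq j j'' 0 (m'' + 1) hj1 hjr hj''1 hj''r heq2
          omega
        rw [hz, sub_zero]
      · rw [if_neg hle, sub_zero]
    · have hle : r ^ 2 ≤ r * (ℓ + 1 + j) + r ^ 2 * m' := by
        have hx : r ^ 2 ≤ r ^ 2 * m' := Nat.le_mul_of_pos_right _ hm'
        omega
      rw [if_pos hle, if_neg (by omega : ¬ m' = 0)]
      have heq3 : r * (ℓ + 1 + j) + r ^ 2 * m' - r ^ 2 =
          r * (ℓ + 1 + j) + r ^ 2 * (m' - 1) := by
        have hx : r ^ 2 * m' = r ^ 2 * (m' - 1) + r ^ 2 := by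
          have : m' = (m' - 1) + 1 := by omega
          nth_rewrite 1 [this]; ring
        omega
      rw [heq3, hcoeffS (m' - 1) j hj1 hjr, sub_self]
  · have hz1 : PowerSeries.coeff m S = 0 := by
      rw [hS, PowerSeries.coeff_mk, if_neg]
      rw [hiff]; exact hPm
    rw [hz1]
    have hz2 : (if r ^ 2 ≤ m then PowerSeries.coeff (m - r ^ 2) S else 0) = 0 := by
      split_ifs with hle
      · rw [hS, PowerSeries.coeff_mk, if_neg]
        rw [hiff]
        rintro ⟨m'', j'', hj''1, hj''r, heq⟩
        refine hPm ⟨m'' + 1, j'', hj''1, hj''r, ?_⟩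
        have hx : r ^ 2 * (m'' + 1) = r ^ 2 * m'' + r ^ 2 := by ring
        omega
      · rfl
    rw [hz2, sub_zero]
    symm
    apply Finset.sum_eq_zero
    intro j' hj'
    simp only [Finset.mem_Ico] at hj'
    rw [if_neg]
    intro hcontra
    exact hPm ⟨0, j', hj'.1, hj'.2, by rw [hcontra]; ring⟩
end

section
/- Let (λ_n)_{n≥1} be the sequence in F_q defined by recursion (1). Then (λ_n)_{n≥1} is 2-automatic, i.e., its 2-kernel { (λ(2^i n + j))_{n≥1} : i ≥ 0, 0 ≤ j < 2^i } is a finite set of sequences. -/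
/-- Theorem (automaticity of the sequences of Proposition 1). Let `q = 2^s`, `r = 2^t`
with `s, t ≥ 1`, `ℓ ≥ 1`, and `λ_1, …, λ_ℓ, ε_1, ε_2 ∈ F_q^*`. Define `(λ_n)_{n ≥ 1}` by
recursion (1): for all `m ≥ 0`, `λ_{ℓ+rm+1} = (ε_2/ε_1) ε_2^((-1)^(m+1)) (λ_{m+1})^r`, and
`λ_{ℓ+rm+i} = (ε_1/ε_2)^((-1)^i)` for `2 ≤ i ≤ r`. Then `(λ_n)_{n ≥ 1}` is `2`-automatic,
i.e. its `2`-kernel is a finite set of sequences. -/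
theorem char_two_recurrence_automatic {F : Type*} [Field F] [Fintype F]
    (s t : ℕ) (hs : 1 ≤ s) (ht : 1 ≤ t) (hcard : Fintype.card F = 2 ^ s)
    (r : ℕ) (hr : r = 2 ^ t)
    (ℓ : ℕ) (hℓ : 1 ≤ ℓ)
    (lam : ℕ → F) (ε₁ ε₂ : F) (hε₁ : ε₁ ≠ 0) (hε₂ : ε₂ ≠ 0)
    (hlam : ∀ n, 1 ≤ n → lam n ≠ 0)
    (hrec1 : ∀ m : ℕ,
      lam (ℓ + r * m + 1) = (ε₂ / ε₁) * ε₂ ^ ((-1 : ℤ) ^ (m + 1)) * (lam (m + 1)) ^ r)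
    (hrec2 : ∀ m i : ℕ, 2 ≤ i → i ≤ r →
      lam (ℓ + r * m + i) = (ε₁ / ε₂) ^ ((-1 : ℤ) ^ i)) :
    Set.Finite {u : ℕ → F | ∃ i j : ℕ, j < 2 ^ i ∧ u = fun n => lam (2 ^ i * n + j)} := by
  classical
  set B : ℤ := (ℓ : ℤ) + 3 with hB
  set B' : ℤ := 2 ^ t + B with hB'
  set N : ℕ := ℓ + 3 with hN
  -- Frobenius facts
  have hq : ∀ x : F, x ^ (2 ^ s) = x := by
    intro x; rw [← hcard]; exact FiniteField.pow_card x
  have hfrobk : ∀ (k : ℕ) (x : F), x ^ ((2 ^ s) ^ k) = x := by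
    intro k
    induction k with
    | zero => intro x; simp
    | succ k ih => intro x; rw [pow_succ, pow_mul, ih, hq]
  have hred : ∀ (f : ℕ) (x : F), x ^ (2 ^ f) = x ^ (2 ^ (f % s)) := by
    intro f x
    conv_lhs => rw [← Nat.mod_add_div f s]
    have h2 : (2 : ℕ) ^ (f % s + s * (f / s)) = 2 ^ (f % s) * (2 ^ s) ^ (f / s) := by
      rw [pow_add, pow_mul]
    rw [h2, pow_mul, hfrobk]
  -- key induction
  have Key : ∀ i : ℕ, ∀ j : ℤ, -B ≤ j → j ≤ 2 ^ i + B →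
      (∃ c : ZMod 2 → F, ∀ n : ℕ, N ≤ n →
        lam ((2 ^ i * (n : ℤ) + j).toNat) = c (n : ZMod 2)) ∨
      (∃ c : ZMod 2 → F, ∃ i₀ f : ℕ, ∃ j₁ : ℤ, i₀ ≤ t ∧ f < s ∧ -B' ≤ j₁ ∧ j₁ ≤ B' ∧
        ∀ n : ℕ, N ≤ n →
          lam ((2 ^ i * (n : ℤ) + j).toNat)
            = c (n : ZMod 2) * (lam ((2 ^ i₀ * (n : ℤ) + j₁).toNat)) ^ 2 ^ f) := by
    intro i
    induction i using Nat.strong_induction_on with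
    | _ i IH =>
      intro j hj1 hj2
      by_cases hit : i ≤ t
      · right
        refine ⟨fun _ => 1, i, 0, j, hit, hs, ?_, ?_, ?_⟩
        · have h2t : (0:ℤ) ≤ 2 ^ t := by positivity
          linarith
        · have hpow : (2:ℤ) ^ i ≤ 2 ^ t := pow_le_pow_right₀ (by norm_num) hit
          linarith
        · intro n hn; simp
      · push_neg at hit
        set i'' := i - t with hi''def
        have hi1 : 1 ≤ i'' := by omega
        have hii : i = i'' + t := by omega
        have hiilt : i'' < i := by omega
        have hr0 : (0:ℤ) < (r:ℤ) := by rw [hr]; positivity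
        have hr2 : (2:ℤ) ≤ (r:ℤ) := by
          rw [hr]
          have : (2:ℕ) ^ 1 ≤ 2 ^ t := Nat.pow_le_pow_right (by norm_num) ht
          exact_mod_cast this
        set e : ℤ := j - (ℓ:ℤ) - 1 with he
        set d : ℤ := e / (r:ℤ) with hd
        set j' : ℤ := e % (r:ℤ) with hj'
        have hed : (r:ℤ) * d + j' = e := Int.mul_ediv_add_emod e r
        have hj'0 : 0 ≤ j' := Int.emod_nonneg e (by exact_mod_cast hr0.ne')
        have hj'r : j' < r := Int.emod_lt_of_pos e hr0
        have h2i : (2:ℤ) ^ i = (r:ℤ) * 2 ^ i'' := by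
          rw [hii, pow_add, hr]; push_cast; ring
        have key1 : (2:ℤ) * (B - 1) ≤ (r:ℤ) * (B - 1) :=
          mul_le_mul_of_nonneg_right hr2 (by rw [hB]; omega)
        have hdlow : -B ≤ d := by
          have h1 : (r:ℤ) * (-B) ≤ (r:ℤ) * d := by nlinarith
          have := le_of_mul_le_mul_left h1 hr0
          linarith
        have hdhigh : d ≤ 2 ^ i'' + B - 1 := by
          have h1 : (r:ℤ) * d ≤ (r:ℤ) * (2 ^ i'' + B - 1) := by nlinarith
          exact le_of_mul_le_mul_left h1 hr0
        -- facts valid for each n ≥ N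
        have hper : ∀ n : ℕ, N ≤ n →
            0 ≤ 2 ^ i'' * (n:ℤ) + d ∧
            ((2:ℤ) ^ i * (n:ℤ) + j) = (2 ^ i'' * (n:ℤ) + d) * r + ((ℓ:ℤ) + 1 + j') := by
          intro n hn
          have h2n : (2:ℤ) ^ 1 ≤ 2 ^ i'' := pow_le_pow_right₀ (by norm_num) hi1
          have hnn : ((N:ℕ):ℤ) ≤ (n:ℤ) := by exact_mod_cast hn
          have hNc : ((N:ℕ):ℤ) = (ℓ:ℤ) + 3 := by rw [hN]; push_cast; ring
          have hmul : (2:ℤ) * (n:ℤ) ≤ 2 ^ i'' * (n:ℤ) := by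
            apply mul_le_mul_of_nonneg_right _ (by positivity)
            simpa using h2n
          constructor
          · have : (0:ℤ) ≤ (n:ℤ) := by positivity
            rw [hB] at hdlow; omega
          · rw [h2i]; linarith [hed]
        by_cases hc : j' = 0
        · -- main recursive case
          set E : F := if d % 2 = 0 then ε₂⁻¹ else ε₂ with hE
          have hmain : ∀ n : ℕ, N ≤ n →
              lam ((2 ^ i * (n:ℤ) + j).toNat)
                = (ε₂ / ε₁) * E * (lam ((2 ^ i'' * (n:ℤ) + (d+1)).toNat)) ^ r := by
            intro n hn
            obtain ⟨hm0, hAeq⟩ := hper n hn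
            set m : ℤ := 2 ^ i'' * (n:ℤ) + d with hm
            set M : ℕ := m.toNat with hMdef
            have hM : (M:ℤ) = m := Int.toNat_of_nonneg hm0
            have hA : (2:ℤ) ^ i * (n:ℤ) + j = ((ℓ + r * M + 1 : ℕ) : ℤ) := by
              push_cast [hM]
              rw [hAeq, hc]; ring
            have hlamA : lam ((2 ^ i * (n:ℤ) + j).toNat) = lam (ℓ + r * M + 1) := by
              rw [hA, Int.toNat_natCast]
            -- parity of M equals parity of d
            have hm2 : (M:ℤ) % 2 = d % 2 := by
              have h2dvd : (2:ℤ) ∣ 2 ^ i'' := dvd_pow_self 2 (by omega)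
              obtain ⟨k, hk⟩ := h2dvd
              have : m = d + 2 * (k * (n:ℤ)) := by rw [hm, hk]; ring
              rw [hM, this, Int.add_mul_emod_self_left]
            have hEe : ε₂ ^ ((-1:ℤ) ^ (M + 1)) = E := by
              by_cases hdp : d % 2 = 0
              · have hModd : Odd (M + 1) := by
                  rw [Nat.odd_iff]; omega
                rw [hModd.neg_one_pow, zpow_neg_one, hE, if_pos hdp]
              · have hMev : Even (M + 1) := by
                  rw [Nat.even_iff]; omega
                rw [hMev.neg_one_pow, zpow_one, hE, if_neg hdp]
            have hMn : lam (M + 1) = lam ((2 ^ i'' * (n:ℤ) + (d+1)).toNat) := by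
              have h1 : ((M + 1 : ℕ) : ℤ) = 2 ^ i'' * (n:ℤ) + (d+1) := by
                push_cast [hM]; rw [hm]; ring
              rw [← h1, Int.toNat_natCast]
            rw [hlamA, hrec1 M, hEe, hMn]
          rcases IH i'' hiilt (d+1) (by linarith) (by linarith) with
            ⟨c, hc'⟩ | ⟨c, i₀, f, j₁, hi₀, hf, hl1, hl2, hc'⟩
          · left
            refine ⟨fun x => (ε₂ / ε₁) * E * (c x) ^ r, fun n hn => ?_⟩
            rw [hmain n hn, hc' n hn]
          · right
            refine ⟨fun x => (ε₂ / ε₁) * E * (c x) ^ r, i₀, (f + t) % s, j₁, hi₀,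
              Nat.mod_lt _ (by omega), hl1, hl2, ?_⟩
            intro n hn
            rw [hmain n hn, hc' n hn, mul_pow]
            have hw : ((lam ((2 ^ i₀ * (n:ℤ) + j₁).toNat)) ^ 2 ^ f) ^ r
                = (lam ((2 ^ i₀ * (n:ℤ) + j₁).toNat)) ^ 2 ^ ((f + t) % s) := by
              rw [← pow_mul, hr, ← pow_add, hred]
            rw [hw]; ring
        · -- constant case
          left
          have hj'1 : 1 ≤ j' := by omega
          set J : ℕ := j'.toNat with hJdef
          have hJ : (J:ℤ) = j' := Int.toNat_of_nonneg hj'0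
          have hJ2 : 2 ≤ J + 1 := by omega
          have hJr : J + 1 ≤ r := by omega
          refine ⟨fun _ => (ε₁ / ε₂) ^ ((-1:ℤ) ^ (J + 1)), fun n hn => ?_⟩
          obtain ⟨hm0, hAeq⟩ := hper n hn
          set m : ℤ := 2 ^ i'' * (n:ℤ) + d with hm
          set M : ℕ := m.toNat with hMdef
          have hM : (M:ℤ) = m := Int.toNat_of_nonneg hm0
          have hA : (2:ℤ) ^ i * (n:ℤ) + j = ((ℓ + r * M + (J + 1) : ℕ) : ℤ) := by
            push_cast [hM, hJ]
            rw [hAeq]; ring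
          rw [hA, Int.toNat_natCast, hrec2 M (J+1) hJ2 hJr]
  -- tail classes are finite
  have tail_fin : ∀ φ : ℕ → F, {u : ℕ → F | ∀ n, N ≤ n → u n = φ n}.Finite := by
    intro φ
    have hinj : Set.InjOn (fun u : ℕ → F => fun k : Fin N => u k)
        {u : ℕ → F | ∀ n, N ≤ n → u n = φ n} := by
      intro u hu v hv h
      funext n
      by_cases hn : n < N
      · exact congrFun h ⟨n, hn⟩
      · rw [hu n (le_of_not_gt hn), hv n (le_of_not_gt hn)]
    exact Set.Finite.of_finite_image (Set.toFinite _) hinj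
  -- assemble
  let P := (ZMod 2 → F) × Option (Fin (t+1) × ↥(Finset.Icc (-B') B') × Fin s)
  let φ : P → ℕ → F := fun p n =>
    p.2.elim (p.1 (n : ZMod 2))
      (fun q => p.1 (n : ZMod 2) *
        (lam ((2 ^ (q.1 : ℕ) * (n:ℤ) + (q.2.1 : ℤ)).toNat)) ^ 2 ^ (q.2.2 : ℕ))
  have hsub : {u : ℕ → F | ∃ i j : ℕ, j < 2 ^ i ∧ u = fun n => lam (2 ^ i * n + j)}
      ⊆ ⋃ p : P, {u : ℕ → F | ∀ n, N ≤ n → u n = φ p n} := by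
    rintro u ⟨i, j, hj, rfl⟩
    have hcast : ∀ n : ℕ, lam (2 ^ i * n + j) = lam ((2 ^ i * (n:ℤ) + (j:ℤ)).toNat) := by
      intro n
      have h1 : ((2 ^ i * n + j : ℕ) : ℤ) = 2 ^ i * (n:ℤ) + (j:ℤ) := by push_cast; ring
      rw [← h1, Int.toNat_natCast]
    have hb1 : -B ≤ (j:ℤ) := by
      rw [hB]; omega
    have hb2 : (j:ℤ) ≤ 2 ^ i + B := by
      have h1 : (j:ℤ) < (2:ℤ) ^ i := by exact_mod_cast hj
      rw [hB]; omega
    rcases Key i (j:ℤ) hb1 hb2 with ⟨c, hc⟩ | ⟨c, i₀, f, j₁, hi₀, hf, hl, hh, hc⟩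
    · refine Set.mem_iUnion.mpr ⟨(c, none), fun n hn => ?_⟩
      exact (hcast n).trans (hc n hn)
    · refine Set.mem_iUnion.mpr
        ⟨(c, some (⟨i₀, by omega⟩, ⟨j₁, Finset.mem_Icc.mpr ⟨hl, hh⟩⟩, ⟨f, hf⟩)),
          fun n hn => ?_⟩
      exact (hcast n).trans (hc n hn)
  exact Set.Finite.subset (Set.finite_iUnion (fun p => tail_fin (φ p))) hsub
end

section
/- Let (λ_n)_{n≥1} be the sequence in F_q^* defined by recursion (1) with r = 2, and let f = ∑_{n≥1} λ_n X^n ∈ F_q[[X]]. Then f belongs to the field of rational functions F_q(X) (i.e., f is the power series expansion of a rational function) if and only if λ_m = (ε_1/ε_2) · ε_2^{((−1)^ℓ − (−1)^m)/2} for all 1 ≤ m ≤ ℓ. -/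
private lemma rat_ev_per {F : Type*} [Field F] [Fintype F] (g : ℕ → F)
    (P Q : Polynomial F) (hQ : Q ≠ 0)
    (h : (Q : PowerSeries F) * PowerSeries.mk g = (P : PowerSeries F)) :
    ∃ N T : ℕ, 0 < T ∧ ∀ n, N ≤ n → g (n + T) = g n := by
  classical
  set v := Q.natTrailingDegree with hv
  set D := Q.natDegree with hD
  have hvD : v ≤ D := Polynomial.natTrailingDegree_le_natDegree Q
  set k := D - v with hk
  have hQv : Q.coeff v ≠ 0 := fun hc => hQ (Polynomial.trailingCoeff_eq_zero.mp hc)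
  set cc : ℕ → F := fun j => -(Q.coeff v)⁻¹ * Q.coeff (v + (k - j)) with hcc
  set N₀ := P.natDegree + 1 with hN₀
  have hrec : ∀ m, N₀ ≤ m →
      g (m + k) = ∑ j ∈ Finset.range k, cc j * g (m + j) := by
    intro m hm
    set n := m + D with hn
    have h0 : ∑ p ∈ Finset.HasAntidiagonal.antidiagonal n, Q.coeff p.1 * g p.2 = 0 := by
      have := congrArg (PowerSeries.coeff n) h
      rw [PowerSeries.coeff_mul, Polynomial.coeff_coe] at this
      simp only [Polynomial.coeff_coe, PowerSeries.coeff_mk] at this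
      rw [this]
      exact Polynomial.coeff_eq_zero_of_natDegree_lt (by omega)
    rw [Finset.Nat.sum_antidiagonal_eq_sum_range_succ_mk] at h0
    have h1 : ∑ i ∈ Finset.Ico v (D+1), Q.coeff i * g (n - i) = 0 := by
      rw [← h0]
      apply Finset.sum_subset
      · intro x hx
        simp only [Finset.mem_Ico] at hx
        simp only [Finset.mem_range]
        omega
      · intro x hx hx'
        simp only [Finset.mem_range] at hx
        simp only [Finset.mem_Ico, not_and, not_lt] at hx'
        rcases Nat.lt_or_ge x v with hc | hc
        · rw [Polynomial.coeff_eq_zero_of_lt_natTrailingDegree hc, zero_mul]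
        · have hc2 : D < x := by have := hx' hc; omega
          rw [Polynomial.coeff_eq_zero_of_natDegree_lt hc2, zero_mul]
    rw [Finset.sum_Ico_eq_sum_range] at h1
    have hDk : D + 1 - v = k + 1 := by omega
    rw [hDk, Finset.sum_range_succ'] at h1
    have h2 : Q.coeff (v + 0) * g (n - (v + 0)) =
        -∑ t ∈ Finset.range k, Q.coeff (v + (t + 1)) * g (n - (v + (t + 1))) :=
      eq_neg_of_add_eq_zero_right h1
    have hnv : n - (v + 0) = m + k := by omega
    rw [hnv, Nat.add_zero] at h2
    have h3 : g (m + k) =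
        ∑ t ∈ Finset.range k, (-(Q.coeff v)⁻¹ * Q.coeff (v + (t + 1))) * g (n - (v + (t + 1))) := by
      calc g (m + k) = (Q.coeff v)⁻¹ * (Q.coeff v * g (m + k)) := by
            rw [inv_mul_cancel_left₀ hQv]
        _ = (Q.coeff v)⁻¹ * (-∑ t ∈ Finset.range k,
              Q.coeff (v + (t + 1)) * g (n - (v + (t + 1)))) := by rw [h2]
        _ = ∑ t ∈ Finset.range k,
              (-(Q.coeff v)⁻¹ * Q.coeff (v + (t + 1))) * g (n - (v + (t + 1))) := by
            rw [← Finset.sum_neg_distrib, Finset.mul_sum]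
            exact Finset.sum_congr rfl fun t _ => by ring
    rw [h3, ← Finset.sum_range_reflect]
    apply Finset.sum_congr rfl
    intro t ht
    simp only [Finset.mem_range] at ht
    have e4 : k - 1 - t + 1 = k - t := by omega
    have e5 : n - (v + (k - t)) = m + t := by omega
    rw [e4, e5]
  -- pigeonhole part
  rcases Nat.eq_zero_or_pos k with hk0 | hk0
  · refine ⟨N₀, 1, Nat.one_pos, fun n hn => ?_⟩
    have e1 := hrec n hn
    have e2 := hrec (n + 1) (by omega)
    rw [hk0] at e1 e2
    simp only [Finset.range_zero, Finset.sum_empty, Nat.add_zero] at e1 e2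
    rw [e1, e2]
  · set w : ℕ → (Fin k → F) := fun m i => g (N₀ + m + i) with hw
    set step : (Fin k → F) → (Fin k → F) := fun val i =>
      if h : (i : ℕ) + 1 < k then val ⟨i + 1, h⟩ else ∑ j : Fin k, cc j * val j with hstep
    have hstepw : ∀ m, w (m + 1) = step (w m) := by
      intro m
      funext i
      rw [hstep]
      by_cases hi : (i : ℕ) + 1 < k
      · simp only [hi, dif_pos]
        show g (N₀ + (m + 1) + i) = g (N₀ + m + (i + 1))
        congr 1
        omega
      · simp only [hi, dif_neg, not_false_iff]
        have hik : (i : ℕ) + 1 = k := by have := i.isLt; omega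
        show g (N₀ + (m + 1) + i) = _
        have e : N₀ + (m + 1) + i = (N₀ + m) + k := by omega
        rw [e, hrec (N₀ + m) (by omega), Finset.sum_range]
    obtain ⟨a, b, hab, he⟩ := Finite.exists_ne_map_eq_of_infinite w
    have main : ∀ a b : ℕ, a < b → w a = w b → ∃ N T : ℕ, 0 < T ∧ ∀ n, N ≤ n → g (n + T) = g n := by
      intro a b hab' he'
      have hiter : ∀ t, w (a + t) = w (b + t) := by
        intro t
        induction t with
        | zero => simpa using he'
        | succ t ih =>
            have e1 : a + (t + 1) = (a + t) + 1 := by omega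
            have e2 : b + (t + 1) = (b + t) + 1 := by omega
            rw [e1, e2, hstepw, hstepw, ih]
      refine ⟨N₀ + a, b - a, by omega, fun n hn => ?_⟩
      have ht := hiter (n - N₀ - a)
      have : w (a + (n - N₀ - a)) ⟨0, hk0⟩ = w (b + (n - N₀ - a)) ⟨0, hk0⟩ := by rw [ht]
      rw [hw] at this
      simp only [] at this
      have e1 : N₀ + (a + (n - N₀ - a)) + (0 : ℕ) = n := by omega
      have e2 : N₀ + (b + (n - N₀ - a)) + (0 : ℕ) = n + (b - a) := by omega
      rw [e1, e2] at this
      exact this.symm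
    rcases Nat.lt_or_ge a b with h' | h'
    · exact main a b h' he
    · exact main b a (by omega) he.symm

/-- Main theorem. -/
theorem char_two_recurrence_rationality {F : Type*} [Field F] [Fintype F]
    (s : ℕ) (hs : 1 ≤ s) (hcard : Fintype.card F = 2 ^ s)
    (r : ℕ) (hr : r = 2)
    (ℓ : ℕ) (hℓ : 1 ≤ ℓ)
    (lam : ℕ → F) (ε₁ ε₂ : F) (hε₁ : ε₁ ≠ 0) (hε₂ : ε₂ ≠ 0)
    (hlam : ∀ n, 1 ≤ n → lam n ≠ 0)
    (hrec1 : ∀ m : ℕ,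
      lam (ℓ + r * m + 1) = (ε₂ / ε₁) * ε₂ ^ ((-1 : ℤ) ^ (m + 1)) * (lam (m + 1)) ^ r)
    (hrec2 : ∀ m i : ℕ, 2 ≤ i → i ≤ r →
      lam (ℓ + r * m + i) = (ε₁ / ε₂) ^ ((-1 : ℤ) ^ i))
    (f : PowerSeries F)
    (hf : f = PowerSeries.mk fun n => if n = 0 then 0 else lam n) :
    (∃ P Q : Polynomial F, Q ≠ 0 ∧ (Q : PowerSeries F) * f = (P : PowerSeries F)) ↔
      (∀ m, 1 ≤ m → m ≤ ℓ →
        lam m = (ε₁ / ε₂) * ε₂ ^ (((-1 : ℤ) ^ ℓ - (-1 : ℤ) ^ m) / 2)) := by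
  classical
  subst hr
  -- characteristic 2
  have hchar2 : (2 : F) = 0 := by
    have hp : CharP F (ringChar F) := ringChar.charP F
    have hprime : Nat.Prime (ringChar F) := CharP.char_is_prime F _
    obtain ⟨n, _, hcardp⟩ := FiniteField.card F (ringChar F)
    have hdvd : ringChar F ∣ 2 ^ s := by
      rw [← hcard, hcardp]
      exact dvd_pow_self _ (by positivity)
    have h2 : ringChar F = 2 :=
      (Nat.prime_dvd_prime_iff_eq hprime Nat.prime_two).mp (hprime.dvd_of_dvd_pow hdvd)
    have := CharP.cast_eq_zero F (ringChar F)
    rw [h2] at this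
    exact_mod_cast this
  have sq_inj : ∀ x y : F, x ^ 2 = y ^ 2 → x = y := by
    intro x y hxy
    have hz : (x - y) ^ 2 = 0 := by linear_combination hxy + (y ^ 2 - x * y) * hchar2
    have := (pow_eq_zero_iff (two_ne_zero)).mp hz
    exact sub_eq_zero.mp this
  -- the target constant sequence
  obtain ⟨c, hcdef⟩ : ∃ c : ℕ → F,
      c = fun n => if n % 2 = ℓ % 2 then ε₁ / ε₂ else (ε₁ / ε₂) * ε₂ ^ ((-1 : ℤ) ^ ℓ) :=
    ⟨_, rfl⟩
  have hcEq : ∀ n, c n = if n % 2 = ℓ % 2 then ε₁ / ε₂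
      else (ε₁ / ε₂) * ε₂ ^ ((-1 : ℤ) ^ ℓ) := fun n => by rw [hcdef]
  have hc0 : ∀ n, c n ≠ 0 := by
    intro n
    rw [hcEq]
    split
    · exact div_ne_zero hε₁ hε₂
    · exact mul_ne_zero (div_ne_zero hε₁ hε₂) (zpow_ne_zero _ hε₂)
  have hcper : ∀ n, c (n + 2) = c n := by
    intro n
    rw [hcEq, hcEq, Nat.add_mod_right]
  -- formula = c
  have hform : ∀ m : ℕ,
      (ε₁ / ε₂) * ε₂ ^ (((-1 : ℤ) ^ ℓ - (-1 : ℤ) ^ m) / 2) = c m := by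
    intro m
    rcases Nat.even_or_odd ℓ with hL | hL <;> rcases Nat.even_or_odd m with hM | hM
    · have hpar : m % 2 = ℓ % 2 := by
        rw [Nat.even_iff.mp hL, Nat.even_iff.mp hM]
      rw [hcEq, if_pos hpar, Even.neg_one_pow hL, Even.neg_one_pow hM]
      norm_num
    · have hpar : ¬ (m % 2 = ℓ % 2) := by
        rw [Nat.even_iff.mp hL, Nat.odd_iff.mp hM]; omega
      rw [hcEq, if_neg hpar, Even.neg_one_pow hL, Odd.neg_one_pow hM]
      norm_num
    · have hpar : ¬ (m % 2 = ℓ % 2) := by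
        rw [Nat.odd_iff.mp hL, Nat.even_iff.mp hM]; omega
      rw [hcEq, if_neg hpar, Odd.neg_one_pow hL, Even.neg_one_pow hM]
      norm_num
    · have hpar : m % 2 = ℓ % 2 := by
        rw [Nat.odd_iff.mp hL, Nat.odd_iff.mp hM]
      rw [hcEq, if_pos hpar, Odd.neg_one_pow hL, Odd.neg_one_pow hM]
      norm_num
  -- specialized recursions
  have hrec2' : ∀ m, lam (ℓ + 2 * m + 2) = ε₁ / ε₂ := by
    intro m
    have := hrec2 m 2 le_rfl le_rfl
    norm_num at this
    exact this
  have hc2 : ∀ m, c (ℓ + 2 * m + 2) = ε₁ / ε₂ := by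
    intro m
    rw [hcEq, if_pos (by omega)]
  have hc1 : ∀ m, c (ℓ + 2 * m + 1)
      = (ε₂ / ε₁) * ε₂ ^ ((-1 : ℤ) ^ (m + 1)) * (c (m + 1)) ^ 2 := by
    intro m
    have hoppar : ¬ ((ℓ + 2 * m + 1) % 2 = ℓ % 2) := by omega
    rcases Nat.even_or_odd ℓ with hL | hL <;> rcases Nat.even_or_odd (m + 1) with hM | hM
    · have hpar : (m + 1) % 2 = ℓ % 2 := by
        rw [Nat.even_iff.mp hL, Nat.even_iff.mp hM]
      rw [hcEq, hcEq, if_neg hoppar, if_pos hpar, Even.neg_one_pow hL, Even.neg_one_pow hM]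
      simp only [zpow_one]
      field_simp
    · have hpar : ¬ ((m + 1) % 2 = ℓ % 2) := by
        rw [Nat.even_iff.mp hL, Nat.odd_iff.mp hM]; omega
      rw [hcEq, hcEq, if_neg hoppar, if_neg hpar, Even.neg_one_pow hL, Odd.neg_one_pow hM]
      simp only [zpow_one, zpow_neg_one]
      field_simp
    · have hpar : ¬ ((m + 1) % 2 = ℓ % 2) := by
        rw [Nat.odd_iff.mp hL, Nat.even_iff.mp hM]; omega
      rw [hcEq, hcEq, if_neg hoppar, if_neg hpar, Odd.neg_one_pow hL, Even.neg_one_pow hM]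
      simp only [zpow_one, zpow_neg_one]
      field_simp
    · have hpar : (m + 1) % 2 = ℓ % 2 := by
        rw [Nat.odd_iff.mp hL, Nat.odd_iff.mp hM]
      rw [hcEq, hcEq, if_neg hoppar, if_pos hpar, Odd.neg_one_pow hL, Odd.neg_one_pow hM]
      simp only [zpow_neg_one]
      field_simp
  -- mu
  obtain ⟨mu, hmudef⟩ : ∃ mu : ℕ → F, mu = fun n => lam n / c n := ⟨_, rfl⟩
  have hmuEq : ∀ n, mu n = lam n / c n := fun n => by rw [hmudef]
  have hmu1 : ∀ m, mu (ℓ + 2 * m + 1) = mu (m + 1) ^ 2 := by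
    intro m
    have hK : (ε₂ / ε₁) * ε₂ ^ ((-1 : ℤ) ^ (m + 1)) ≠ 0 :=
      mul_ne_zero (div_ne_zero hε₂ hε₁) (zpow_ne_zero _ hε₂)
    rw [hmuEq, hmuEq, hrec1 m, hc1 m, div_pow, mul_div_mul_left _ _ hK]
  have hmu2 : ∀ m, mu (ℓ + 2 * m + 2) = 1 := by
    intro m
    rw [hmuEq, hrec2' m, hc2 m, div_self (div_ne_zero hε₁ hε₂)]
  constructor
  · -- rational → condition
    rintro ⟨P, Q, hQ0, hPQ⟩
    rw [hf] at hPQ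
    obtain ⟨N, T, hT, hper⟩ := rat_ev_per _ P Q hQ0 hPQ
    have hlper : ∀ n, N + 1 ≤ n → lam (n + T) = lam n := by
      intro n hn
      have := hper n (by omega)
      simp only [if_neg (by omega : ¬ (n + T = 0)), if_neg (by omega : ¬ (n = 0))] at this
      exact this
    have hmuper : ∀ n, N + 1 ≤ n → mu (n + 2 * T) = mu n := by
      intro n hn
      have hl : lam (n + 2 * T) = lam n := by
        have e : n + 2 * T = n + T + T := by ring
        rw [e, hlper (n + T) (by omega), hlper n hn]
      have hcc : c (n + 2 * T) = c n := by
        rw [hcEq, hcEq, Nat.add_mul_mod_self_left]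
      rw [hmuEq, hmuEq, hl, hcc]
    -- descent lemma
    have hD1 : ∀ R N' : ℕ, (∀ n, N' ≤ n → mu (n + 2 * R) = mu n) →
        ∀ m, N' ≤ ℓ + 2 * m + 1 → mu (m + 1 + R) = mu (m + 1) := by
      intro R N' hp m hm
      have h4 : mu (m + R + 1) ^ 2 = mu (m + 1) ^ 2 := by
        calc mu (m + R + 1) ^ 2 = mu (ℓ + 2 * (m + R) + 1) := (hmu1 (m + R)).symm
          _ = mu ((ℓ + 2 * m + 1) + 2 * R) := by rw [show ℓ + 2 * (m + R) + 1
                = (ℓ + 2 * m + 1) + 2 * R from by ring]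
          _ = mu (ℓ + 2 * m + 1) := hp _ hm
          _ = mu (m + 1) ^ 2 := hmu1 m
      have := sq_inj _ _ h4
      rwa [show m + 1 + R = m + R + 1 from by omega]
    -- propagate periodicity down to 1
    have hfull : ∀ T' N' : ℕ, (∀ n, N' ≤ n → mu (n + T') = mu n) →
        ∀ n, 1 ≤ n → mu (n + T') = mu n := by
      intro T' N'
      induction N' using Nat.strong_induction_on with
      | _ N' ih =>
        intro hp n hn
        rcases le_or_gt N' 1 with hN | hN
        · exact hp n (le_trans hN hn)
        · have hp2 : ∀ n, N' ≤ n → mu (n + 2 * T') = mu n := by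
            intro n hn
            have e : n + 2 * T' = n + T' + T' := by ring
            rw [e, hp _ (by omega), hp _ hn]
          have hstep : ∀ j, (N' + 1) / 2 ≤ j → mu (j + T') = mu j := by
            intro j hj
            have hj1 : 1 ≤ j := by omega
            have := hD1 T' N' hp2 (j - 1) (by omega)
            rwa [show j - 1 + 1 = j from by omega] at this
          exact ih ((N' + 1) / 2) (by omega) hstep n hn
    -- extract an odd period valid from 1
    have hodd : ∀ T' : ℕ, 0 < T' → (∀ n, 1 ≤ n → mu (n + T') = mu n) →
        ∃ u, Odd u ∧ ∀ n, 1 ≤ n → mu (n + u) = mu n := by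
      intro T'
      induction T' using Nat.strong_induction_on with
      | _ T' ih =>
        intro hT' hp
        rcases Nat.even_or_odd T' with hE | hO
        · obtain ⟨R, hR⟩ := hE
          have hp2 : ∀ n, 1 ≤ n → mu (n + 2 * R) = mu n := by
            intro n hn
            rw [show 2 * R = T' from by omega]
            exact hp n hn
          have hstep : ∀ j, 1 ≤ j → mu (j + R) = mu j := by
            intro j hj
            have := hD1 R 1 (fun n hn => hp2 n hn) (j - 1) (by omega)
            rwa [show j - 1 + 1 = j from by omega] at this
          exact ih R (by omega) (by omega) hstep
        · exact ⟨T', hO, hp⟩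
    obtain ⟨u, huodd, huper⟩ := hodd (2 * T) (by omega) (hfull (2 * T) (N + 1) hmuper)
    have hupos : 0 < u := by
      rcases huodd with ⟨t, ht⟩; omega
    have hiter : ∀ k n, 1 ≤ n → mu (n + u * k) = mu n := by
      intro k
      induction k with
      | zero => intro n hn; simp
      | succ k ih =>
          intro n hn
          rw [show n + u * (k + 1) = (n + u * k) + u from by ring,
            huper _ (by omega), ih n hn]
    have hclassL : ∀ n, 1 ≤ n → n % 2 = ℓ % 2 → mu n = 1 := by
      intro n hn hpar
      have hWle : ℓ + 2 ≤ u * (ℓ + 2) := Nat.le_mul_of_pos_left _ hupos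
      have hwE : u * (2 * (ℓ + 2)) = 2 * (u * (ℓ + 2)) := by ring
      obtain ⟨m, hm⟩ : ∃ m, n + 2 * (u * (ℓ + 2)) = ℓ + 2 * m + 2 :=
        ⟨(n + 2 * (u * (ℓ + 2)) - ℓ - 2) / 2, by omega⟩
      have h5 := hiter (2 * (ℓ + 2)) n hn
      rw [hwE, hm, hmu2 m] at h5
      exact h5.symm
    have hclassO : ∀ n, 1 ≤ n → ¬ (n % 2 = ℓ % 2) → mu n = 1 := by
      intro n hn hpar
      have hWle : ℓ + 1 ≤ u * (ℓ + 1) := Nat.le_mul_of_pos_left _ hupos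
      have hwE : u * (2 * (ℓ + 1)) = 2 * (u * (ℓ + 1)) := by ring
      obtain ⟨m₀, hm₀⟩ : ∃ m₀, n + 2 * (u * (ℓ + 1)) = ℓ + 2 * m₀ + 1 :=
        ⟨(n + 2 * (u * (ℓ + 1)) - ℓ - 1) / 2, by omega⟩
      have key : ∀ m : ℕ, (m + 1) % 2 = ℓ % 2 → mu (ℓ + 2 * m + 1) = 1 := by
        intro m hm
        rw [hmu1 m, hclassL (m + 1) (by omega) hm, one_pow]
      by_cases hcase : (m₀ + 1) % 2 = ℓ % 2
      · have h5 := hiter (2 * (ℓ + 1)) n hn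
        rw [hwE, hm₀, key m₀ hcase] at h5
        exact h5.symm
      · have hu2 : u % 2 = 1 := Nat.odd_iff.mp huodd
        have hcase2 : (m₀ + u + 1) % 2 = ℓ % 2 := by omega
        have h5 := hiter (2 * (ℓ + 1) + 2) n hn
        have e : n + u * (2 * (ℓ + 1) + 2) = ℓ + 2 * (m₀ + u) + 1 := by
          have e2 : u * (2 * (ℓ + 1) + 2) = 2 * (u * (ℓ + 1)) + 2 * u := by ring
          omega
        rw [e, key (m₀ + u) hcase2] at h5
        exact h5.symm
    intro m hm1 hm2
    have hmu_one : mu m = 1 := by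
      by_cases hpar : m % 2 = ℓ % 2
      · exact hclassL m hm1 hpar
      · exact hclassO m hm1 hpar
    rw [hform m]
    rw [hmuEq] at hmu_one
    exact (div_eq_one_iff_eq (hc0 m)).mp hmu_one
  · -- condition → rational
    intro hcond
    have hall : ∀ n, 1 ≤ n → lam n = c n := by
      intro n
      induction n using Nat.strong_induction_on with
      | _ n ih =>
        intro hn
        rcases le_or_gt n ℓ with hnℓ | hnℓ
        · rw [hcond n hn hnℓ]
          exact hform n
        · rcases Nat.even_or_odd (n - (ℓ + 1)) with hE | hO
          · obtain ⟨m, hm⟩ : ∃ m, n = ℓ + 2 * m + 1 := by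
              rcases hE with ⟨t, ht⟩; exact ⟨t, by omega⟩
            have hIH : lam (m + 1) = c (m + 1) := ih (m + 1) (by omega) (by omega)
            rw [hm, hrec1 m, hIH]
            exact (hc1 m).symm
          · obtain ⟨m, hm⟩ : ∃ m, n = ℓ + 2 * m + 2 := by
              rcases hO with ⟨t, ht⟩; exact ⟨t, by omega⟩
            rw [hm, hrec2' m]
            exact (hc2 m).symm
    have hper2 : ∀ n, 1 ≤ n → lam (n + 2) = lam n := by
      intro n hn
      rw [hall (n + 2) (by omega), hall n hn, hcper]
    refine ⟨Polynomial.C (lam 1) * Polynomial.X + Polynomial.C (lam 2) * Polynomial.X ^ 2,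
      1 - Polynomial.X ^ 2, ?_, ?_⟩
    · intro hcon
      have := congrArg (fun p => Polynomial.coeff p 0) hcon
      simp at this
    · rw [hf]
      apply PowerSeries.ext
      intro n
      rw [Polynomial.coe_sub, Polynomial.coe_one, Polynomial.coe_pow, Polynomial.coe_X,
        sub_mul, one_mul, map_sub, mul_comm (PowerSeries.X ^ 2), PowerSeries.coeff_mul_X_pow',
        Polynomial.coeff_coe]
      simp only [PowerSeries.coeff_mk, Polynomial.coeff_add, Polynomial.coeff_C_mul,
        Polynomial.coeff_X, Polynomial.coeff_X_pow]
      match n with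
      | 0 => norm_num
      | 1 => norm_num
      | 2 => norm_num
      | (t + 3) =>
          have h6 : lam (t + 3) = lam (t + 1) := by
            rw [show t + 3 = (t + 1) + 2 from by omega]
            exact hper2 (t + 1) (by omega)
          simp only [if_neg (by omega : ¬ (t + 3 = 0)), if_pos (by omega : 2 ≤ t + 3)]
          rw [show t + 3 - 2 = t + 1 from by omega, if_neg (by omega : ¬ (t + 1 = 0))]
          rw [h6]
          simp only [if_neg (by omega : ¬ (t + 3 = 1)), if_neg (by omega : ¬ (t + 3 = 2))]
          rw [if_neg (by omega : ¬ (1 = t + 3))]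
          ring
end

section
/- Let q = 2^s with s ≥ 1 an integer, and let U ∈ F_q[X] be a nonzero polynomial with zero constant term, of order a ≥ 1 (the smallest exponent with nonzero coefficient) and degree b, satisfying b < 2a. Then the power series σ = ∑_{m≥0} U^{2^m} ∈ F_q[[X]] is irrational: there are no polynomials P, Q ∈ F_q[X] with Q ≠ 0 and Q·σ = P. -/
open Polynomial

lemma aux_natTrailingDegree_pow {F : Type*} [Field F] (p : F[X]) (hp : p ≠ 0) (n : ℕ) :
    (p ^ n).natTrailingDegree = n * p.natTrailingDegree := by
  induction n with
  | zero => simp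
  | succ k ih =>
    rw [pow_succ, natTrailingDegree_mul (pow_ne_zero _ hp) hp, ih]; ring

lemma aux_trailingCoeff_pow {F : Type*} [Field F] (p : F[X]) (n : ℕ) :
    (p ^ n).trailingCoeff = p.trailingCoeff ^ n := by
  induction n with
  | zero => simp [trailingCoeff]
  | succ k ih => rw [pow_succ, trailingCoeff_mul, ih, pow_succ]

/-- Irrationality of `σ = ∑_{m ≥ 0} U^(2^m)` (used in the proof of Proposition 3).
Let `q = 2^s` and let `U ∈ F_q[X]` be a nonzero polynomial with zero constant term, of
order `a ≥ 1` (smallest exponent with nonzero coefficient, i.e. trailing degree) and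
degree `b`, with `b < 2a`. Then the power series `σ = ∑_{m ≥ 0} U^(2^m)` (defined
coefficientwise) is irrational: there are no polynomials `P, Q` with `Q ≠ 0` and
`Q σ = P`. -/
theorem sum_of_two_power_powers_irrational {F : Type*} [Field F] [Fintype F]
    (s : ℕ) (hs : 1 ≤ s) (hcard : Fintype.card F = 2 ^ s)
    (U : Polynomial F) (hU : U ≠ 0) (hU0 : U.coeff 0 = 0)
    (a b : ℕ) (ha : U.natTrailingDegree = a) (hb : U.natDegree = b)
    (ha1 : 1 ≤ a) (hab : b < 2 * a)
    (σ : PowerSeries F)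
    (hσ : ∀ n : ℕ, PowerSeries.coeff n σ =
      ∑ m ∈ Finset.range (n + 1), PowerSeries.coeff n ((U : PowerSeries F) ^ 2 ^ m)) :
    ¬ ∃ P Q : Polynomial F, Q ≠ 0 ∧ (Q : PowerSeries F) * σ = (P : PowerSeries F) := by
  rintro ⟨P, Q, hQ, hPQ⟩
  have hab' : a ≤ b := ha ▸ hb ▸ natTrailingDegree_le_natDegree U
  -- coefficient of U^(2^m) as a power series
  have hcoe : ∀ m k : ℕ,
      PowerSeries.coeff k ((U : PowerSeries F) ^ 2 ^ m) = (U ^ 2 ^ m).coeff k := by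
    intro m k
    rw [← Polynomial.coe_pow, Polynomial.coeff_coe]
  have htd : ∀ m : ℕ, (U ^ 2 ^ m).natTrailingDegree = 2 ^ m * a := by
    intro m; rw [aux_natTrailingDegree_pow U hU, ha]
  have hnd : ∀ m : ℕ, (U ^ 2 ^ m).natDegree = 2 ^ m * b := by
    intro m; rw [natDegree_pow, hb]
  -- vanishing of each term outside its support
  have hvan_lo : ∀ m k : ℕ, k < 2 ^ m * a → (U ^ 2 ^ m).coeff k = 0 := by
    intro m k hk
    exact coeff_eq_zero_of_lt_natTrailingDegree (by rw [htd]; exact hk)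
  have hvan_hi : ∀ m k : ℕ, 2 ^ m * b < k → (U ^ 2 ^ m).coeff k = 0 := by
    intro m k hk
    exact coeff_eq_zero_of_natDegree_lt (by rw [hnd]; exact hk)
  -- σ vanishes in the gaps : 2^m * b < k < 2^(m+1) * a
  have hgap : ∀ m k : ℕ, 2 ^ m * b < k → k < 2 ^ (m + 1) * a →
      PowerSeries.coeff k σ = 0 := by
    intro m k h1 h2
    rw [hσ]
    refine Finset.sum_eq_zero fun j _ => ?_
    rw [hcoe]
    rcases le_or_gt j m with hj | hj
    · exact hvan_hi j k (lt_of_le_of_lt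
        (Nat.mul_le_mul_right b (Nat.pow_le_pow_right (by norm_num) hj)) h1)
    · exact hvan_lo j k (lt_of_lt_of_le h2
        (Nat.mul_le_mul_right a (Nat.pow_le_pow_right (by norm_num) hj)))
  -- σ at 2^m * a is (trailingCoeff U)^(2^m) ≠ 0
  have hnz : ∀ m : ℕ, PowerSeries.coeff (2 ^ m * a) σ = U.trailingCoeff ^ 2 ^ m := by
    intro m
    rw [hσ]
    have hmem : m ∈ Finset.range (2 ^ m * a + 1) := by
      refine Finset.mem_range.2 ?_
      have : m < 2 ^ m := Nat.lt_two_pow_self (n := m)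
      calc m < 2 ^ m := this
        _ ≤ 2 ^ m * a := Nat.le_mul_of_pos_right _ ha1
        _ < 2 ^ m * a + 1 := Nat.lt_succ_self _
    rw [Finset.sum_eq_single_of_mem m hmem]
    · rw [hcoe]
      have : (2 : ℕ) ^ m * a = (U ^ 2 ^ m).natTrailingDegree := (htd m).symm
      rw [this]
      exact aux_trailingCoeff_pow U (2 ^ m)
    · intro j _ hj
      rw [hcoe]
      rcases lt_or_gt_of_ne hj with hjm | hjm
      · refine hvan_hi j _ ?_
        have h1 : 2 ^ j * b ≤ 2 ^ (m - 1) * b :=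
          Nat.mul_le_mul_right b (Nat.pow_le_pow_right (by norm_num) (by omega))
        have h2 : 2 ^ (m - 1) * (b + 1) ≤ 2 ^ (m - 1) * (2 * a) :=
          Nat.mul_le_mul_left _ (by omega)
        have h3 : 2 ^ (m - 1) * (2 * a) = 2 ^ m * a := by
          rw [← mul_assoc, mul_comm (2 ^ (m-1)) 2, ← pow_succ']
          congr 2; omega
        have h4 : 2 ^ (m - 1) * (b + 1) = 2 ^ (m - 1) * b + 2 ^ (m - 1) := by ring
        have h5 : (0:ℕ) < 2 ^ (m - 1) := by positivity
        omega
      · refine hvan_lo j _ ?_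
        have : 2 ^ m * a < 2 ^ j * a := by
          have : (2:ℕ) ^ m < 2 ^ j := Nat.pow_lt_pow_right (by norm_num) hjm
          exact Nat.mul_lt_mul_of_lt_of_le this (le_refl a) ha1
        exact this
  have hc : U.trailingCoeff ≠ 0 := trailingCoeff_nonzero_iff_nonzero.2 hU
  -- choose M large
  set t := Q.natTrailingDegree with ht
  set d := Q.natDegree with hd
  set M := d + 1 + P.natDegree with hM
  set n := 2 ^ M * a + t with hn
  -- the key coefficient computation
  have hcoeffQσ : PowerSeries.coeff n ((Q : PowerSeries F) * σ) =
      Q.coeff t * U.trailingCoeff ^ 2 ^ M := by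
    rw [PowerSeries.coeff_mul]
    rw [Finset.sum_eq_single_of_mem (t, 2 ^ M * a)
      (by simp [Finset.mem_antidiagonal, hn, Nat.add_comm])]
    · rw [Polynomial.coeff_coe, hnz M]
    · rintro ⟨j, k⟩ hjk hne
      have hjk' : j + k = n := Finset.HasAntidiagonal.mem_antidiagonal.1 hjk
      rcases lt_or_ge j t with hjt | hjt
      · rw [Polynomial.coeff_coe, coeff_eq_zero_of_lt_natTrailingDegree hjt, zero_mul]
      rcases le_or_gt j d with hjd | hjd
      · -- t ≤ j ≤ d, (j,k) ≠ (t, 2^M a) so j > t, hence k < 2^M a; show σ_k = 0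
        have hjt' : t < j := by
          rcases Nat.eq_or_lt_of_le hjt with h | h
          · exfalso; apply hne; rw [← h] at hjk' ⊢; simp [hn] at hjk' ⊢; omega
          · exact h
        have hk1 : k < 2 ^ M * a := by omega
        have hk2 : 2 ^ (M - 1) * b < k := by
          have hAB : 2 ^ (M - 1) * b + 2 ^ (M - 1) ≤ 2 ^ M * a := by
            have h2 : 2 ^ (M - 1) * (b + 1) ≤ 2 ^ (M - 1) * (2 * a) :=
              Nat.mul_le_mul_left _ (by omega)
            have h3 : 2 ^ (M - 1) * (2 * a) = 2 ^ M * a := by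
              rw [← mul_assoc, mul_comm (2 ^ (M-1)) 2, ← pow_succ']
              congr 2; omega
            have h4 : 2 ^ (M - 1) * (b + 1) = 2 ^ (M - 1) * b + 2 ^ (M - 1) := by ring
            omega
          have hMd : d + 1 ≤ 2 ^ (M - 1) := by
            have := Nat.lt_two_pow_self (n := M - 1)
            omega
          omega
        have hMgap : k < 2 ^ (M - 1 + 1) * a := by
          have : M - 1 + 1 = M := by omega
          rw [this]; exact hk1
        rw [hgap (M - 1) k hk2 hMgap, mul_zero]
      · rw [Polynomial.coeff_coe, coeff_eq_zero_of_natDegree_lt hjd, zero_mul]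
  -- but coeff n P = 0 since n > natDegree P
  have hPn : P.coeff n = 0 := by
    refine coeff_eq_zero_of_natDegree_lt ?_
    have : M < 2 ^ M := Nat.lt_two_pow_self (n := M)
    have : P.natDegree < 2 ^ M * a := by
      have h2 : 2 ^ M ≤ 2 ^ M * a := Nat.le_mul_of_pos_right _ ha1
      omega
    omega
  have := congrArg (PowerSeries.coeff n) hPQ
  rw [hcoeffQσ, Polynomial.coeff_coe, hPn] at this
  exact (mul_ne_zero (by rw [ht]; exact trailingCoeff_nonzero_iff_nonzero.2 hQ)
    (pow_ne_zero _ hc)) this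
end

section
/- Let r ≥ 2 be an integer, let v = (v(n))_{n≥1} be a sequence with values in a finite set A, and let σ be a bijection of A. Fix an integer i with 0 ≤ i < r and an integer m ≥ 0. If (T_i v)(n + m) = σ(v(n)) for all integers n ≥ 1, and if T_j v is r-automatic for every integer j with 0 ≤ j < r and j ≠ i, then v is r-automatic. -/
/-- The `r`-kernel of a sequence `v`: the set of sequences `(v (r^i n + j))_n` for
`i ≥ 0` and `0 ≤ j < r^i`. A sequence is `r`-automatic iff its `r`-kernel is finite. -/
def rKernel {A : Type*} (r : ℕ) (v : ℕ → A) : Set (ℕ → A) :=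
  {u : ℕ → A | ∃ i j : ℕ, j < r ^ i ∧ u = fun n => v (r ^ i * n + j)}

lemma tail_finite {A : Type*} [Finite A] (N : ℕ) (F : Set (ℕ → A)) (hF : F.Finite) :
    {u : ℕ → A | ∃ f ∈ F, ∀ n, N ≤ n → u n = f (n - N)}.Finite := by
  have heq : {u : ℕ → A | ∃ f ∈ F, ∀ n, N ≤ n → u n = f (n - N)} =
      ⋃ f ∈ F, {u | ∀ n, N ≤ n → u n = f (n - N)} := by
    ext u; simp
  rw [heq]
  refine hF.biUnion fun f _ => ?_
  apply Set.Finite.of_finite_image (f := fun u => fun k : Fin N => u k)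
  · exact Set.toFinite _
  · intro u₁ h₁ u₂ h₂ he
    funext n
    by_cases hn : N ≤ n
    · rw [h₁ n hn, h₂ n hn]
    · exact congrFun he ⟨n, by omega⟩

lemma genKernel_finite {A : Type*} [Finite A] (r N M : ℕ) (hr : 1 ≤ r) (hMN : M ≤ N)
    (w : ℕ → A) (hw : (rKernel r w).Finite) :
    {f : ℕ → A | ∃ (h : A → A) (k : ℕ) (q : ℤ), -(M:ℤ) ≤ q ∧ q < (r:ℤ)^k ∧
      f = fun n : ℕ => h (w (((r:ℤ)^k * ((n:ℤ) + N) + q).toNat))}.Finite := by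
  have hfin : ((fun p : (A → A) × (ℕ → A) × ℕ => fun n => p.1 (p.2.1 (n + p.2.2))) ''
      (Set.univ ×ˢ rKernel r w ×ˢ Set.Iic N)).Finite :=
    (Set.finite_univ.prod (hw.prod (Set.finite_Iic N))).image _
  refine hfin.subset ?_
  rintro f ⟨h, k, q, hq1, hq2, rfl⟩
  have hrk : 0 < r ^ k := pow_pos hr k
  have hrk' : (1:ℤ) ≤ (r:ℤ)^k := by exact_mod_cast hrk
  have hJ0 : 0 ≤ (r:ℤ)^k * N + q := by nlinarith
  set J := ((r:ℤ)^k * N + q).toNat with hJdef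
  have hJeq : (J : ℤ) = (r:ℤ)^k * N + q := Int.toNat_of_nonneg hJ0
  have hcast : ((r:ℤ))^k = ((r^k : ℕ) : ℤ) := by push_cast; ring
  have hJlt : J < r^k * (N+1) := by
    have h' : (J:ℤ) < (r:ℤ)^k * (N+1) := by rw [hJeq]; nlinarith
    rw [hcast] at h'; exact_mod_cast h'
  have hdle : J / r^k ≤ N := by
    have : J / r^k < N + 1 := by
      rw [Nat.div_lt_iff_lt_mul hrk, Nat.mul_comm]; exact hJlt
    omega
  refine ⟨(h, fun n => w (r^k * n + J % r^k), J / r^k), ⟨Set.mem_univ _,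
    ⟨k, J % r^k, Nat.mod_lt _ hrk, rfl⟩, hdle⟩, ?_⟩
  funext n
  simp only
  congr 2
  have harg : ((r:ℤ)^k * ((n:ℤ) + N) + q) = ((r^k * n + J : ℕ) : ℤ) := by
    push_cast; linarith
  rw [harg, Int.toNat_natCast]
  have := Nat.div_add_mod J (r^k)
  ring_nf
  omega

/-- Theorem 3 of the paper (criterion for automatic sequences). Let `r ≥ 2`, let
`v = (v(n))_{n ≥ 1}` be a sequence with values in a finite set `A`, and let `σ` be a
bijection of `A`. Fix `0 ≤ i < r` and `m ≥ 0`. If `(T_i v)(n + m) = σ(v(n))` for all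
`n ≥ 1` (where `(T_j v)(n) = v(rn + j)`), and if `T_j v` is `r`-automatic for every
`0 ≤ j < r` with `j ≠ i`, then `v` is `r`-automatic. -/
theorem automatic_criterion {A : Type*} [Finite A]
    (r : ℕ) (hr : 2 ≤ r) (v : ℕ → A) (σ : A ≃ A)
    (i : ℕ) (hi : i < r) (m : ℕ)
    (h1 : ∀ n, 1 ≤ n → v (r * (n + m) + i) = σ (v n))
    (h2 : ∀ j, j < r → j ≠ i → (rKernel r fun n => v (r * n + j)).Finite) :
    (rKernel r v).Finite := by
  have hrz : (0:ℤ) < (r:ℤ) := by exact_mod_cast (by omega : 0 < r)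
  have hr2 : (2:ℤ) ≤ (r:ℤ) := by exact_mod_cast hr
  let T : ℕ → Set (ℕ → A) := fun s =>
    {f : ℕ → A | ∃ (h : A → A) (k : ℕ) (q : ℤ), -((2*m+2 : ℕ):ℤ) ≤ q ∧ q < (r:ℤ)^k ∧
      f = fun n : ℕ => h ((fun n' => v (r * n' + s)) (((r:ℤ)^k * ((n:ℤ) + (3*m+3 : ℕ)) + q).toNat))}
  have hTfin : ∀ s, s < r → s ≠ i → (T s).Finite := fun s hs hsi =>
    genKernel_finite r (3*m+3) (2*m+2) (by omega) (by omega) _ (h2 s hs hsi)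
  let S₀ : Set (ℕ → A) :=
    (fun p : (A → A) × ℕ => fun n => p.1 (v (n + p.2))) '' (Set.univ ×ˢ Set.Iic (3*m+3))
  have hS₀fin : S₀.Finite :=
    (Set.finite_univ.prod (Set.finite_Iic _)).image _
  let F : Set (ℕ → A) := S₀ ∪ ⋃ s ∈ {s : ℕ | s < r ∧ s ≠ i}, T s
  have hFfin : F.Finite := by
    refine hS₀fin.union ?_
    refine Set.Finite.biUnion ((Set.finite_Iio r).subset ?_) fun s hs => hTfin s hs.1 hs.2
    intro s hs; exact hs.1
  -- key claim by induction on k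
  have key : ∀ (k : ℕ) (h : A → A) (j : ℤ), -((2*m+2 : ℕ):ℤ) ≤ j → j < (r:ℤ)^k →
      (fun n : ℕ => h (v (((r:ℤ)^k * ((n:ℤ) + (3*m+3 : ℕ)) + j).toNat))) ∈ F := by
    intro k
    induction k with
    | zero =>
      intro h j hj1 hj2
      left
      have hj0 : j ≤ 0 := by
        have : j < 1 := by simpa using hj2
        omega
      refine ⟨(h, (((3*m+3 : ℕ):ℤ) + j).toNat), ⟨Set.mem_univ _, ?_⟩, ?_⟩
      · simp only [Set.mem_Iic]
        omega
      · funext n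
        simp only
        congr 2
        simp only [pow_zero, one_mul]
        omega
    | succ k ih =>
      intro h j hj1 hj2
      have hrk1 : (1:ℤ) ≤ (r:ℤ)^k := one_le_pow₀ (by linarith)
      obtain ⟨q, e, hje, he0, her, hq1, hq2⟩ :
          ∃ q e : ℤ, j = (r:ℤ) * q + e ∧ 0 ≤ e ∧ e < (r:ℤ) ∧
            -((m:ℤ)+1) ≤ q ∧ q < (r:ℤ)^k := by
        refine ⟨j / (r:ℤ), j % (r:ℤ), (Int.mul_ediv_add_emod j (r:ℤ)).symm,
          Int.emod_nonneg j (by omega), Int.emod_lt_of_pos j hrz, ?_, ?_⟩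
        · rw [Int.le_ediv_iff_mul_le hrz]
          push_cast at hj1
          nlinarith [mul_nonneg (show (0:ℤ) ≤ (m:ℤ)+1 by positivity)
            (show (0:ℤ) ≤ (r:ℤ)-2 by linarith)]
        · rw [Int.ediv_lt_iff_lt_mul hrz]
          calc j < (r:ℤ)^(k+1) := hj2
            _ = (r:ℤ)^k * r := pow_succ (r:ℤ) k
      set s := e.toNat with hs
      have hse : (s:ℤ) = e := Int.toNat_of_nonneg he0
      have hsr : s < r := by omega
      by_cases hsi : s = i
      · -- residue i : use the functional relation h1
        have hmem := ih (fun a => h (σ a)) (q - m)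
          (by push_cast; omega)
          (by have hm0 := Int.natCast_nonneg m; linarith)
        have hfeq : (fun n : ℕ => h (v (((r:ℤ)^(k+1) * ((n:ℤ) + (3*m+3 : ℕ)) + j).toNat))) =
            (fun n : ℕ => (fun a => h (σ a))
              (v (((r:ℤ)^k * ((n:ℤ) + (3*m+3 : ℕ)) + (q - m)).toNat))) := by
          funext n
          have hn0 : (0:ℤ) ≤ (n:ℤ) := Int.natCast_nonneg n
          have hxnn : (0:ℤ) ≤ (r:ℤ)^k * ((n:ℤ) + (3*m+3 : ℕ)) + q := by
            push_cast; nlinarith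
          set x := ((r:ℤ)^k * ((n:ℤ) + (3*m+3 : ℕ)) + q).toNat with hx
          have hxe : (x:ℤ) = (r:ℤ)^k * ((n:ℤ) + (3*m+3 : ℕ)) + q := Int.toNat_of_nonneg hxnn
          have hxm : m + 1 ≤ x := by
            have hh : ((m:ℤ)+1) ≤ (x:ℤ) := by
              rw [hxe]; push_cast; nlinarith
            exact_mod_cast hh
          have hie : ((i:ℤ)) = e := by omega
          have harg1 : ((r:ℤ)^(k+1) * ((n:ℤ) + (3*m+3 : ℕ)) + j).toNat = r * x + i := by
            have hieq : (r:ℤ)^(k+1) * ((n:ℤ) + (3*m+3 : ℕ)) + j = ((r * x + i : ℕ) : ℤ) := by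
              push_cast
              push_cast at hxe
              rw [hxe, pow_succ, hje, hie]; ring
            rw [hieq, Int.toNat_natCast]
          have harg2 : ((r:ℤ)^k * ((n:ℤ) + (3*m+3 : ℕ)) + (q - m)).toNat = x - m := by
            have hieq : (r:ℤ)^k * ((n:ℤ) + (3*m+3 : ℕ)) + (q - m) = ((x - m : ℕ) : ℤ) := by
              rw [Nat.cast_sub (by omega)]
              push_cast
              push_cast at hxe
              rw [hxe]; ring
            rw [hieq, Int.toNat_natCast]
          rw [harg1, harg2]
          simp only
          have h1' := h1 (x - m) (by omega)
          rw [Nat.sub_add_cancel (by omega)] at h1'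
          rw [h1']
        rw [hfeq]
        exact hmem
      · -- other residues : lands in T s
        right
        refine Set.mem_biUnion (show s ∈ {s : ℕ | s < r ∧ s ≠ i} from ⟨hsr, hsi⟩) ?_
        refine ⟨h, k, q, by push_cast; omega, hq2, ?_⟩
        funext n
        simp only
        congr 2
        have hn0 : (0:ℤ) ≤ (n:ℤ) := Int.natCast_nonneg n
        have hxnn : (0:ℤ) ≤ (r:ℤ)^k * ((n:ℤ) + (3*m+3 : ℕ)) + q := by
          push_cast; nlinarith
        have hxe : ((((r:ℤ)^k * ((n:ℤ) + (3*m+3 : ℕ)) + q).toNat : ℕ) : ℤ) =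
            (r:ℤ)^k * ((n:ℤ) + (3*m+3 : ℕ)) + q := Int.toNat_of_nonneg hxnn
        have hieq : (r:ℤ)^(k+1) * ((n:ℤ) + (3*m+3 : ℕ)) + j =
            ((r * (((r:ℤ)^k * ((n:ℤ) + (3*m+3 : ℕ)) + q).toNat) + s : ℕ) : ℤ) := by
          push_cast
          push_cast at hxe
          rw [hxe, pow_succ, hje, ← hse]; ring
        rw [hieq, Int.toNat_natCast]
  -- now conclude
  have hsub : rKernel r v ⊆ {u : ℕ → A | ∃ f ∈ F, ∀ n, (3*m+3) ≤ n → u n = f (n - (3*m+3))} := by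
    rintro u ⟨k, j, hjlt, rfl⟩
    have hjz : ((j:ℤ)) < (r:ℤ)^k := by
      have : ((j:ℤ)) < (((r^k : ℕ)):ℤ) := by exact_mod_cast hjlt
      push_cast at this; exact this
    refine ⟨_, key k id (j:ℤ) (by push_cast; omega) hjz, ?_⟩
    intro n hn
    simp only [id]
    congr 1
    have hieq : (r:ℤ)^k * (((n - (3*m+3) : ℕ):ℤ) + (3*m+3 : ℕ)) + (j:ℤ) =
        ((r^k * n + j : ℕ) : ℤ) := by
      rw [Nat.cast_sub hn]
      push_cast; ring
    rw [hieq, Int.toNat_natCast]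
  exact (tail_finite (3*m+3) F hFfin).subset hsub
end

section
/- Let u = (u(n))_{n≥1} be the sequence in F_q defined by recursion (3). Then u is r-automatic, i.e., its r-kernel { (u(r^i n + j))_{n≥1} : i ≥ 0, 0 ≤ j < r^i } is a finite set of sequences. -/
/-- Theorem 4 of the paper. Let `ℓ ≥ 1`, `r ≥ 2`, `k ≥ 1` with `k ∣ r`, `p` prime,
`q = p^s`. Let `(u(n))_{n ≥ 1}` in `F_q` be defined by recursion (3): for all `m ≥ 0`
and `0 ≤ i < k`, `u(ℓ+1+r(km+i)) = α_{i+1} (u(km+i+1))^γ` and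
`u(ℓ+1+r(km+i)+j) = β_{i,j}` for `1 ≤ j < r`, where the `α`'s are nonzero and `γ ≥ 1`
is coprime with `q - 1`. Then `u` is `r`-automatic, i.e. its `r`-kernel
`{ (u (r^i n + j))_{n ≥ 1} : i ≥ 0, 0 ≤ j < r^i }` is a finite set of sequences. -/
theorem recurrence_gamma_automatic {F : Type*} [Field F] [Fintype F]
    (p s : ℕ) (hp : p.Prime) (hs : 1 ≤ s) (hcard : Fintype.card F = p ^ s)
    (ℓ r k : ℕ) (hℓ : 1 ≤ ℓ) (hr : 2 ≤ r) (hk : 1 ≤ k) (hkr : k ∣ r)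
    (u : ℕ → F) (α : ℕ → F) (β : ℕ → ℕ → F) (γ : ℕ)
    (hγ : 1 ≤ γ) (hγcop : Nat.Coprime γ (Fintype.card F - 1))
    (hα : ∀ i, 1 ≤ i → i ≤ k → α i ≠ 0)
    (hrec1 : ∀ m i : ℕ, i < k →
      u (ℓ + 1 + r * (k * m + i)) = α (i + 1) * (u (k * m + i + 1)) ^ γ)
    (hrec2 : ∀ m i : ℕ, i < k → ∀ j, 1 ≤ j → j < r →
      u (ℓ + 1 + r * (k * m + i) + j) = β i j) :
    Set.Finite {w : ℕ → F | ∃ i j : ℕ, j < r ^ i ∧ w = fun n => u (r ^ i * n + j)} := by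
  classical
  haveI : NeZero k := ⟨by omega⟩
  set A : ℕ := (ℓ + 1) / r with hA
  set b : ℕ := (ℓ + 1) % r with hbdef
  have hab : ℓ + 1 = r * A + b := (Nat.div_add_mod (ℓ + 1) r).symm
  have habZ : (ℓ:ℤ) + 1 = (r:ℤ) * A + b := by exact_mod_cast hab
  have hbr : b < r := Nat.mod_lt _ (by omega)
  set N₀ : ℕ := 2 * A + 2 with hN₀def
  have hk0 : (0:ℤ) < (k:ℤ) := by exact_mod_cast hk
  -- congruence helper: (e*n + D) % k depends only on n mod k
  have hmod : ∀ (e D : ℤ) (n : ℕ),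
      (e * (n:ℤ) + D) % (k:ℤ) = (e * ((n : ZMod k).val : ℤ) + D) % (k:ℤ) := by
    intro e D n
    have hdm := Nat.div_add_mod n k
    have h1 : (n : ℤ) = ((n : ZMod k).val : ℤ) + (k : ℤ) * ((n / k : ℕ) : ℤ) := by
      rw [ZMod.val_natCast]
      exact_mod_cast (by omega : n = n % k + k * (n / k))
    rw [h1]
    have h2 : e * (((n : ZMod k).val : ℤ) + (k:ℤ) * ((n / k : ℕ) : ℤ)) + D
        = (e * ((n : ZMod k).val : ℤ) + D) + (e * ((n / k : ℕ) : ℤ)) * (k:ℤ) := by ring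
    rw [h2, Int.add_mul_emod_self_right]
  have key : ∀ i : ℕ, ∀ j : ℤ, -(2*(A:ℤ)) ≤ j → j ≤ (r:ℤ)^i + 1 →
      ∃ (g : ZMod k → F) (φ : F → F) (c : ℤ), -(2*(A:ℤ)) ≤ c ∧ c ≤ 2 ∧
        ∀ n : ℕ, N₀ ≤ n →
          u (((r:ℤ)^i * (n:ℤ) + j).toNat) = g (n : ZMod k) * φ (u (((n:ℤ) + c).toNat)) := by
    intro i
    induction i with
    | zero =>
      intro j h1 h2
      exact ⟨fun _ => 1, id, j, h1, by simpa using h2, fun n hn => by simp⟩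
    | succ i ih =>
      intro j h1 h2
      have hr0 : (0:ℤ) < (r:ℤ) := by exact_mod_cast (by omega : 0 < r)
      have hrr : (2:ℤ) ≤ (r:ℤ) := by exact_mod_cast hr
      have hpow1 : (1:ℤ) ≤ (r:ℤ)^i := one_le_pow₀ (by linarith)
      have hAnn : (0:ℤ) ≤ (A:ℤ) := Int.natCast_nonneg A
      set j₀ : ℤ := j % r with hj₀def
      set j₁ : ℤ := j / r with hj₁def
      have hj : j = (r:ℤ) * j₁ + j₀ := (Int.mul_ediv_add_emod j r).symm
      have hj₀l : 0 ≤ j₀ := Int.emod_nonneg j (by omega)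
      have hj₀u : j₀ < r := Int.emod_lt_of_pos j hr0
      have hj₁l : -(A:ℤ) ≤ j₁ := by
        rw [hj₁def, Int.le_ediv_iff_mul_le hr0]
        have h2A : (A:ℤ) * 2 ≤ (A:ℤ) * r := by
          apply mul_le_mul_of_nonneg_left _ hAnn
          exact hrr
        linarith
      have hj₁u : j₁ ≤ (r:ℤ)^i := by
        have hlt : j₁ < (r:ℤ)^i + 1 := by
          rw [hj₁def, Int.ediv_lt_iff_lt_mul hr0]
          have hps : (r:ℤ)^(i+1) = (r:ℤ)^i * r := pow_succ _ _
          nlinarith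
        omega
      -- decomposition data
      set ε : ℕ := if (b:ℤ) ≤ j₀ then 0 else 1 with hεdef
      set J₀ : ℕ := (j₀ - b + r * ε).toNat with hJ₀def
      have hJ₀ : (J₀:ℤ) = j₀ - b + r * ε := by
        rw [hJ₀def, hεdef]
        split <;> push_cast <;> omega
      have hJ₀u : (J₀:ℤ) < r := by
        rw [hJ₀, hεdef]; split <;> push_cast <;> omega
      have hJ₀pos : j₀ ≠ (b:ℤ) → 1 ≤ (J₀:ℤ) := by
        intro hne; rw [hJ₀, hεdef]; split <;> push_cast <;> omega
      have hεle : (ε:ℤ) ≤ 1 := by rw [hεdef]; split <;> simp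
      have hεnn : (0:ℤ) ≤ (ε:ℤ) := Int.natCast_nonneg ε
      -- the core index computation
      have main : ∀ n : ℕ, N₀ ≤ n →
          ∃ T : ℕ, (T:ℤ) = (r:ℤ)^i * n + j₁ - A - ε ∧
            ((r:ℤ)^(i+1) * n + j).toNat = ℓ + 1 + r * T + J₀ ∧
            ((T % k : ℕ) : ℤ) = ((r:ℤ)^i * ((n : ZMod k).val : ℤ) + (j₁ - A - ε)) % k := by
        intro n hn
        have hnZ : 2*(A:ℤ) + 2 ≤ (n:ℤ) := by
          have : (N₀:ℤ) ≤ (n:ℤ) := by exact_mod_cast hn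
          rw [hN₀def] at this; push_cast at this; linarith
        have hRn : (n:ℤ) ≤ (r:ℤ)^i * n := le_mul_of_one_le_left (Int.natCast_nonneg n) hpow1
        have htnn : 0 ≤ (r:ℤ)^i * n + j₁ - A - ε := by linarith
        set T : ℕ := ((r:ℤ)^i * n + j₁ - A - ε).toNat with hTdef
        have hT : (T:ℤ) = (r:ℤ)^i * n + j₁ - A - ε := Int.toNat_of_nonneg htnn
        refine ⟨T, hT, ?_, ?_⟩
        · have hgoalZ : (r:ℤ)^(i+1) * n + j = ((ℓ + 1 + r * T + J₀ : ℕ) : ℤ) := by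
            push_cast
            rw [hT, hJ₀]
            linear_combination hj - habZ
          rw [hgoalZ, Int.toNat_natCast]
        · have h3 : ((T % k : ℕ) : ℤ) = (T:ℤ) % k := Int.natCast_mod T k
          rw [h3, hT]
          have h4 : (r:ℤ)^i * n + j₁ - A - ε = (r:ℤ)^i * n + (j₁ - A - ε) := by ring
          rw [h4]
          exact hmod _ _ n
      by_cases hcase : j₀ = (b:ℤ)
      · -- α case
        have hε : ε = 0 := by rw [hεdef, if_pos (le_of_eq hcase.symm)]
        have hJ0 : J₀ = 0 := by
          have := hJ₀; rw [hε] at this; push_cast at this; omega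
        obtain ⟨g, φ, c, hc1, hc2, hgφ⟩ := ih (j₁ + 1 - A) (by linarith) (by linarith)
        refine ⟨fun x => α ((((r:ℤ)^i * (x.val:ℤ) + (j₁ - A - 0)) % k).toNat + 1) * (g x)^γ,
                fun y => (φ y)^γ, c, hc1, hc2, ?_⟩
        intro n hn
        obtain ⟨T, hT, hidx, hTmod⟩ := main n hn
        rw [hidx, hJ0, add_zero, ← Nat.div_add_mod T k,
            hrec1 (T/k) (T%k) (Nat.mod_lt T (by omega))]
        have hidx2 : k * (T/k) + T % k + 1 = ((r:ℤ)^i * n + (j₁ + 1 - A)).toNat := by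
          rw [Nat.div_add_mod T k]
          have h5 : (r:ℤ)^i * n + (j₁ + 1 - A) = ((T + 1 : ℕ) : ℤ) := by
            push_cast
            rw [hT, hε]
            push_cast
            ring
          rw [h5, Int.toNat_natCast]
        rw [hidx2, hgφ n hn]
        have hTk : T % k = (((r:ℤ)^i * ((n : ZMod k).val : ℤ) + (j₁ - A - 0)) % k).toNat := by
          rw [hε] at hTmod
          simp only [Nat.cast_zero] at hTmod
          rw [← hTmod, Int.toNat_natCast]
        rw [hTk, mul_pow]
        ring
      · -- β case
        refine ⟨fun x => β ((((r:ℤ)^i * (x.val:ℤ) + (j₁ - A - ε)) % k).toNat) J₀,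
                fun _ => 1, 0, by linarith, by norm_num, ?_⟩
        intro n hn
        obtain ⟨T, hT, hidx, hTmod⟩ := main n hn
        have hJ1 : 1 ≤ J₀ := by exact_mod_cast hJ₀pos hcase
        have hJr : J₀ < r := by exact_mod_cast hJ₀u
        rw [hidx, ← Nat.div_add_mod T k,
            hrec2 (T/k) (T%k) (Nat.mod_lt T (by omega)) J₀ hJ1 hJr]
        have hTk : T % k = (((r:ℤ)^i * ((n : ZMod k).val : ℤ) + (j₁ - A - ε)) % k).toNat := by
          rw [← hTmod, Int.toNat_natCast]
        simp [hTk]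
  -- assemble: the kernel is contained in a finite catalogue
  have hsub : {w : ℕ → F | ∃ i j : ℕ, j < r ^ i ∧ w = fun n => u (r ^ i * n + j)} ⊆
      Set.range (fun q : (Fin N₀ → F) × (ZMod k → F) × (F → F) × Fin (2*A+3) =>
        fun n : ℕ => if h : n < N₀ then q.1 ⟨n, h⟩
          else q.2.1 (n : ZMod k) *
            q.2.2.1 (u (((n:ℤ) + ((q.2.2.2 : ℕ) : ℤ) - 2*(A:ℤ)).toNat))) := by
    rintro w ⟨i, j, hj, rfl⟩
    have hjZ : (j:ℤ) ≤ (r:ℤ)^i + 1 := by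
      have : (j:ℤ) < ((r^i : ℕ) : ℤ) := by exact_mod_cast hj
      push_cast at this; linarith
    obtain ⟨g, φ, c, hc1, hc2, hgφ⟩ := key i j (by omega) hjZ
    refine ⟨(fun m => u (r^i * m + j), g, φ, ⟨(c + 2*A).toNat, by omega⟩), ?_⟩
    funext n
    by_cases hn : n < N₀
    · simp [hn]
    · simp only [dif_neg hn]
      have hn' : N₀ ≤ n := le_of_not_gt hn
      have e1 : ((r:ℤ)^i * (n:ℤ) + (j:ℤ)).toNat = r^i * n + j := by
        have : (r:ℤ)^i * (n:ℤ) + (j:ℤ) = ((r^i * n + j : ℕ) : ℤ) := by push_cast; ring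
        rw [this, Int.toNat_natCast]
      have e2 : ((n:ℤ) + (((c + 2*(A:ℤ)).toNat : ℕ) : ℤ) - 2*(A:ℤ)).toNat
          = ((n:ℤ) + c).toNat := by omega
      have := hgφ n hn'
      rw [e1] at this
      rw [this, e2]
  exact Set.Finite.subset (Set.finite_range _) hsub
end

section
/- Let u = (u(n))_{n≥1} be the sequence in F_q defined by recursion (3), and write ℓ + 1 = ra + b with a ≥ 0 and 0 ≤ b < r integers. Then for every integer j with 0 ≤ j < r and j ≠ b, the sequence (u(rn + j))_{n≥1} is ultimately periodic; moreover, for all integers m ≥ 0 and 0 ≤ i < k, u(r(km + i + a) + b) = α_{i+1} (u(km+i+1))^γ. -/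
/-- Step in the proof of Theorem 4 of the paper. Let `(u(n))_{n ≥ 1}` in `F_q` be defined
by recursion (3), and write `ℓ + 1 = ra + b` with `a ≥ 0` and `0 ≤ b < r`. Then for every
`0 ≤ j < r` with `j ≠ b`, the sequence `(u(rn + j))_{n ≥ 1}` is ultimately periodic;
moreover, for all `m ≥ 0` and `0 ≤ i < k`, `u(r(km + i + a) + b) = α_{i+1} (u(km+i+1))^γ`. -/
theorem recurrence_gamma_subsequences {F : Type*} [Field F] [Fintype F]
    (p s : ℕ) (hp : p.Prime) (hs : 1 ≤ s) (hcard : Fintype.card F = p ^ s)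
    (ℓ r k : ℕ) (hℓ : 1 ≤ ℓ) (hr : 2 ≤ r) (hk : 1 ≤ k) (hkr : k ∣ r)
    (u : ℕ → F) (α : ℕ → F) (β : ℕ → ℕ → F) (γ : ℕ)
    (hγ : 1 ≤ γ) (hγcop : Nat.Coprime γ (Fintype.card F - 1))
    (hα : ∀ i, 1 ≤ i → i ≤ k → α i ≠ 0)
    (hrec1 : ∀ m i : ℕ, i < k →
      u (ℓ + 1 + r * (k * m + i)) = α (i + 1) * (u (k * m + i + 1)) ^ γ)
    (hrec2 : ∀ m i : ℕ, i < k → ∀ j, 1 ≤ j → j < r →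
      u (ℓ + 1 + r * (k * m + i) + j) = β i j)
    (a b : ℕ) (hab : ℓ + 1 = r * a + b) (hb : b < r) :
    (∀ j, j < r → j ≠ b →
      ∃ N : ℕ, 1 ≤ N ∧ ∃ d : ℕ, 1 ≤ d ∧
        ∀ n, N ≤ n → u (r * (n + d) + j) = u (r * n + j)) ∧
    (∀ m i : ℕ, i < k →
      u (r * (k * m + i + a) + b) = α (i + 1) * (u (k * m + i + 1)) ^ γ) := by
  have hk0 : 0 < k := hk
  -- value of u on residues above b
  have key1 : ∀ j, b < j → j < r → ∀ n, a ≤ n → u (r * n + j) = β ((n - a) % k) (j - b) := by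
    intro j hbj hjr n hn
    obtain ⟨t, rfl⟩ : ∃ t, n = a + t := ⟨n - a, by omega⟩
    have h := hrec2 (t / k) (t % k) (Nat.mod_lt t hk0) (j - b) (by omega) (by omega)
    rw [Nat.div_add_mod] at h
    have harith : ℓ + 1 + r * t + (j - b) = r * (a + t) + j := by
      rw [hab]; ring_nf; omega
    rw [harith] at h
    simpa using h
  -- value of u on residues below b
  have key2 : ∀ j, j < b → ∀ n, a + 1 ≤ n →
      u (r * n + j) = β ((n - 1 - a) % k) (r + j - b) := by
    intro j hjb n hn
    obtain ⟨t, rfl⟩ : ∃ t, n = a + 1 + t := ⟨n - a - 1, by omega⟩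
    have h := hrec2 (t / k) (t % k) (Nat.mod_lt t hk0) (r + j - b) (by omega) (by omega)
    rw [Nat.div_add_mod] at h
    have harith : ℓ + 1 + r * t + (r + j - b) = r * (a + 1 + t) + j := by
      rw [hab, Nat.mul_add, Nat.mul_add]; omega
    rw [harith] at h
    simpa using h
  constructor
  · intro j hjr hjb
    refine ⟨a + 1, by omega, k, hk, ?_⟩
    intro n hn
    rcases lt_or_gt_of_ne hjb with hlt | hgt
    · rw [key2 j hlt n hn, key2 j hlt (n + k) (by omega)]
      congr 1
      have : n + k - 1 - a = (n - 1 - a) + k := by omega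
      rw [this, Nat.add_mod_right]
    · rw [key1 j hgt hjr n (by omega), key1 j hgt hjr (n + k) (by omega)]
      congr 1
      have : n + k - a = (n - a) + k := by omega
      rw [this, Nat.add_mod_right]
  · intro m i hi
    have h := hrec1 m i hi
    have harith : ℓ + 1 + r * (k * m + i) = r * (k * m + i + a) + b := by
      rw [hab]; ring
    rw [harith] at h
    exact h
end
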